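/- arXiv:1704.01654 — 3 statements merged into one kernel-verified Lean document; each statement's English description precedes it below -/
import Mathlib

section
/- In the ring R = k[x,y,z,u]/(x²,xy,y²,z²,zu,u²), the residue classes of the linear forms l₁ = x−z and l₂ = x+z satisfy l₁·l₂ = 0, and the annihilator ideals are given by (0 : l₁) = (yu, l₂) and (0 : l₂) = (yu, l₁), where (yu, l) denotes the ideal of R generated by yu and l. -/
open MvPolynomial

set_option synthInstance.maxHeartbeats 1000000
set_option maxHeartbeats 1000000

noncomputable section

/-- The defining ideal `(x², xy, y², z², zu, u²)` of Roos' ring, with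
`x = X 0`, `y = X 1`, `z = X 2`, `u = X 3`. -/
def roosIdeal (k : Type*) [Field k] : Ideal (MvPolynomial (Fin 4) k) :=
  Ideal.span {X 0 ^ 2, X 0 * X 1, X 1 ^ 2, X 2 ^ 2, X 2 * X 3, X 3 ^ 2}

/-- The ring `R = k[x,y,z,u]/(x², xy, y², z², zu, u²)`. -/
abbrev RoosRing (k : Type*) [Field k] := MvPolynomial (Fin 4) k ⧸ roosIdeal k

/-- The residue classes of the variables `x, y, z, u` in `R`. -/
def rv (k : Type*) [Field k] (i : Fin 4) : RoosRing k :=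
  Ideal.Quotient.mk (roosIdeal k) (X i)

namespace RoosAux

open Finsupp

/-- The exponents of the generators of the Roos ideal. -/
def SI : Set (Fin 4 →₀ ℕ) :=
  {single 0 2, single 0 1 + single 1 1, single 1 2, single 2 2, single 2 1 + single 3 1,
    single 3 2}

lemma X_mul_X' {k : Type*} [Field k] (i j : Fin 4) :
    (X i : MvPolynomial (Fin 4) k) * X j = monomial (single i 1 + single j 1) 1 := by
  rw [X, X, monomial_mul, mul_one]

lemma roos_eq (k : Type*) [Field k] :
    roosIdeal k = Ideal.span ((fun s => monomial s (1:k)) '' SI) := by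
  unfold roosIdeal SI
  congr 1
  simp only [Set.image_insert_eq, Set.image_singleton, X_pow_eq_monomial, X_mul_X']

/-- combinatorial core: a nonzero exponent which is not a single variable dominates a
degree-two monomial. -/
lemma exists_two_le (d : Fin 4 →₀ ℕ) (h0 : d ≠ 0) (h1 : ∀ i, d ≠ single i 1) :
    ∃ i j : Fin 4, single i 1 + single j 1 ≤ d := by
  obtain ⟨i, hi⟩ : ∃ i, d i ≠ 0 := by
    by_contra h
    push_neg at h
    exact h0 (Finsupp.ext fun a => h a)
  by_cases h2 : 2 ≤ d i
  · refine ⟨i, i, ?_⟩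
    rw [Finsupp.le_def]
    intro a
    rcases eq_or_ne i a with rfl | hne
    · simpa using h2
    · simp [Finsupp.single_apply, hne]
  · by_cases h3 : ∃ j, j ≠ i ∧ d j ≠ 0
    · obtain ⟨j, hji, hj⟩ := h3
      refine ⟨i, j, ?_⟩
      rw [Finsupp.le_def]
      intro a
      rcases eq_or_ne i a with rfl | hne
      · simp [Finsupp.single_apply, hji]
        omega
      · rcases eq_or_ne j a with rfl | hne2
        · simp [Finsupp.single_apply, hne]
          omega
        · simp [Finsupp.single_apply, hne, hne2]
    · push_neg at h3
      exfalso
      apply h1 i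
      apply Finsupp.ext
      intro a
      rcases eq_or_ne a i with rfl | hne
      · simp [Finsupp.single_apply]
        omega
      · simp [Finsupp.single_apply, Ne.symm hne, h3 a hne]

variable {k : Type*} [Field k]

/-- every polynomial with vanishing coefficients in degrees ≤ 1 lies in the span of the
quadratic monomials. -/
lemma mem_sq (q : MvPolynomial (Fin 4) k) (h0 : coeff 0 q = 0)
    (h1 : ∀ i, coeff (single i 1) q = 0) :
    q ∈ Ideal.span ((fun s => monomial s (1:k)) ''
      (Set.range fun ij : Fin 4 × Fin 4 => single ij.1 1 + single ij.2 1)) := by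
  rw [mem_ideal_span_monomial_image]
  intro m hm
  rw [MvPolynomial.mem_support_iff] at hm
  have hm0 : m ≠ 0 := fun h => hm (h ▸ h0)
  have hm1 : ∀ i, m ≠ single i 1 := fun i h => hm (h ▸ h1 i)
  obtain ⟨i, j, hij⟩ := exists_two_le m hm0 hm1
  exact ⟨single i 1 + single j 1, ⟨⟨i, j⟩, rfl⟩, hij⟩

lemma quad_mem_plus (i j : Fin 4) :
    (X i : MvPolynomial (Fin 4) k) * X j ∈
      Ideal.span {X 1 * X 3, X 0 + X 2} ⊔ roosIdeal k := by
  set J := Ideal.span {(X 1 : MvPolynomial (Fin 4) k) * X 3, X 0 + X 2} ⊔ roosIdeal k with hJ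
  have hI : ∀ f ∈ ({X 0^2, X 0*X 1, X 1^2, X 2^2, X 2*X 3, X 3^2} :
      Set (MvPolynomial (Fin 4) k)), f ∈ J :=
    fun f hf => Ideal.mem_sup_right (Ideal.subset_span hf)
  have ha : (X 0 + X 2 : MvPolynomial (Fin 4) k) ∈ J :=
    Ideal.mem_sup_left (Ideal.subset_span (by simp))
  have hyu : (X 1 : MvPolynomial (Fin 4) k) * X 3 ∈ J :=
    Ideal.mem_sup_left (Ideal.subset_span (by simp))
  have h00 : (X 0 : MvPolynomial (Fin 4) k) * X 0 ∈ J := by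
    rw [← sq]; exact hI _ (by simp)
  have h01 : (X 0 : MvPolynomial (Fin 4) k) * X 1 ∈ J := hI _ (by simp)
  have h11 : (X 1 : MvPolynomial (Fin 4) k) * X 1 ∈ J := by
    rw [← sq]; exact hI _ (by simp)
  have h22 : (X 2 : MvPolynomial (Fin 4) k) * X 2 ∈ J := by
    rw [← sq]; exact hI _ (by simp)
  have h23 : (X 2 : MvPolynomial (Fin 4) k) * X 3 ∈ J := hI _ (by simp)
  have h33 : (X 3 : MvPolynomial (Fin 4) k) * X 3 ∈ J := by
    rw [← sq]; exact hI _ (by simp)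
  have h02 : (X 0 : MvPolynomial (Fin 4) k) * X 2 ∈ J := by
    have : (X 0 : MvPolynomial (Fin 4) k) * X 2 = X 0 * (X 0 + X 2) - X 0 * X 0 := by ring
    rw [this]
    exact Ideal.sub_mem _ (Ideal.mul_mem_left _ _ ha) h00
  have h03 : (X 0 : MvPolynomial (Fin 4) k) * X 3 ∈ J := by
    have : (X 0 : MvPolynomial (Fin 4) k) * X 3 = X 3 * (X 0 + X 2) - X 2 * X 3 := by ring
    rw [this]
    exact Ideal.sub_mem _ (Ideal.mul_mem_left _ _ ha) h23
  have h12 : (X 1 : MvPolynomial (Fin 4) k) * X 2 ∈ J := by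
    have : (X 1 : MvPolynomial (Fin 4) k) * X 2 = X 1 * (X 0 + X 2) - X 0 * X 1 := by ring
    rw [this]
    exact Ideal.sub_mem _ (Ideal.mul_mem_left _ _ ha) h01
  have h13 : (X 1 : MvPolynomial (Fin 4) k) * X 3 ∈ J := hyu
  fin_cases i <;> fin_cases j <;>
    first
      | exact h00 | exact h01 | exact h02 | exact h03
      | exact h11 | exact h12 | exact h13
      | exact h22 | exact h23 | exact h33
      | (rw [mul_comm]; first
          | exact h00 | exact h01 | exact h02 | exact h03
          | exact h11 | exact h12 | exact h13
          | exact h22 | exact h23 | exact h33)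

lemma quad_mem_minus (i j : Fin 4) :
    (X i : MvPolynomial (Fin 4) k) * X j ∈
      Ideal.span {X 1 * X 3, X 0 - X 2} ⊔ roosIdeal k := by
  set J := Ideal.span {(X 1 : MvPolynomial (Fin 4) k) * X 3, X 0 - X 2} ⊔ roosIdeal k with hJ
  have hI : ∀ f ∈ ({X 0^2, X 0*X 1, X 1^2, X 2^2, X 2*X 3, X 3^2} :
      Set (MvPolynomial (Fin 4) k)), f ∈ J :=
    fun f hf => Ideal.mem_sup_right (Ideal.subset_span hf)
  have ha : (X 0 - X 2 : MvPolynomial (Fin 4) k) ∈ J :=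
    Ideal.mem_sup_left (Ideal.subset_span (by simp))
  have hyu : (X 1 : MvPolynomial (Fin 4) k) * X 3 ∈ J :=
    Ideal.mem_sup_left (Ideal.subset_span (by simp))
  have h00 : (X 0 : MvPolynomial (Fin 4) k) * X 0 ∈ J := by
    rw [← sq]; exact hI _ (by simp)
  have h01 : (X 0 : MvPolynomial (Fin 4) k) * X 1 ∈ J := hI _ (by simp)
  have h11 : (X 1 : MvPolynomial (Fin 4) k) * X 1 ∈ J := by
    rw [← sq]; exact hI _ (by simp)
  have h22 : (X 2 : MvPolynomial (Fin 4) k) * X 2 ∈ J := by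
    rw [← sq]; exact hI _ (by simp)
  have h23 : (X 2 : MvPolynomial (Fin 4) k) * X 3 ∈ J := hI _ (by simp)
  have h33 : (X 3 : MvPolynomial (Fin 4) k) * X 3 ∈ J := by
    rw [← sq]; exact hI _ (by simp)
  have h02 : (X 0 : MvPolynomial (Fin 4) k) * X 2 ∈ J := by
    have : (X 0 : MvPolynomial (Fin 4) k) * X 2 = X 0 * X 0 - X 0 * (X 0 - X 2) := by ring
    rw [this]
    exact Ideal.sub_mem _ h00 (Ideal.mul_mem_left _ _ ha)
  have h03 : (X 0 : MvPolynomial (Fin 4) k) * X 3 ∈ J := by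
    have : (X 0 : MvPolynomial (Fin 4) k) * X 3 = X 3 * (X 0 - X 2) + X 2 * X 3 := by ring
    rw [this]
    exact Ideal.add_mem _ (Ideal.mul_mem_left _ _ ha) h23
  have h12 : (X 1 : MvPolynomial (Fin 4) k) * X 2 ∈ J := by
    have : (X 1 : MvPolynomial (Fin 4) k) * X 2 = X 0 * X 1 - X 1 * (X 0 - X 2) := by ring
    rw [this]
    exact Ideal.sub_mem _ h01 (Ideal.mul_mem_left _ _ ha)
  have h13 : (X 1 : MvPolynomial (Fin 4) k) * X 3 ∈ J := hyu
  fin_cases i <;> fin_cases j <;>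
    first
      | exact h00 | exact h01 | exact h02 | exact h03
      | exact h11 | exact h12 | exact h13
      | exact h22 | exact h23 | exact h33
      | (rw [mul_comm]; first
          | exact h00 | exact h01 | exact h02 | exact h03
          | exact h11 | exact h12 | exact h13
          | exact h22 | exact h23 | exact h33)

lemma sq_le_plus :
    Ideal.span ((fun s => monomial s (1:k)) ''
        (Set.range fun ij : Fin 4 × Fin 4 => single ij.1 1 + single ij.2 1)) ≤
      Ideal.span {X 1 * X 3, X 0 + X 2} ⊔ roosIdeal k := by
  rw [Ideal.span_le]
  rintro _ ⟨s, ⟨⟨i, j⟩, rfl⟩, rfl⟩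
  dsimp only
  rw [← X_mul_X']
  exact quad_mem_plus i j

lemma sq_le_minus :
    Ideal.span ((fun s => monomial s (1:k)) ''
        (Set.range fun ij : Fin 4 × Fin 4 => single ij.1 1 + single ij.2 1)) ≤
      Ideal.span {X 1 * X 3, X 0 - X 2} ⊔ roosIdeal k := by
  rw [Ideal.span_le]
  rintro _ ⟨s, ⟨⟨i, j⟩, rfl⟩, rfl⟩
  dsimp only
  rw [← X_mul_X']
  exact quad_mem_minus i j

/-- key lemma A: annihilator of x - z. -/
lemma keyA (p : MvPolynomial (Fin 4) k) (H : p * (X 0 - X 2) ∈ roosIdeal k) :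
    p ∈ Ideal.span {X 1 * X 3, X 0 + X 2} ⊔ roosIdeal k := by
  rw [roos_eq, mem_ideal_span_monomial_image] at H
  have key : ∀ m, (¬ ∃ s ∈ SI, s ≤ m) → coeff m (p * (X 0 - X 2)) = 0 := by
    intro m hm
    by_contra h
    exact hm (H m (MvPolynomial.mem_support_iff.mpr h))
  have nond : ∀ m : Fin 4 →₀ ℕ,
      (∀ s ∈ SI, ¬ s ≤ m) → (¬ ∃ s ∈ SI, s ≤ m) := by
    rintro m h ⟨s, hs, hle⟩; exact h s hs hle
  -- the five coefficient equations
  have e0 : coeff 0 p = 0 := by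
    have h := key (single 0 1) ?_
    · rw [mul_sub, coeff_sub, coeff_mul_X', coeff_mul_X'] at h
      simp only [Finsupp.mem_support_iff, Finsupp.single_apply] at h
      simpa using h
    · apply nond
      intro s hs hle
      rw [Finsupp.le_def] at hle
      simp only [SI, Set.mem_insert_iff, Set.mem_singleton_iff] at hs
      have g0 := hle 0; have g1 := hle 1; have g2 := hle 2; have g3 := hle 3
      rcases hs with rfl|rfl|rfl|rfl|rfl|rfl <;>
        simp [Finsupp.single_apply, Finsupp.add_apply] at g0 g1 g2 g3
  have e13 : coeff (single 2 1) p = coeff (single 0 1) p := by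
    have h := key (single 0 1 + single 2 1) ?_
    · rw [mul_sub, coeff_sub, coeff_mul_X', coeff_mul_X'] at h
      simp only [Finsupp.mem_support_iff, Finsupp.add_apply, Finsupp.single_apply] at h
      simp at h
      exact sub_eq_zero.mp h
    · apply nond
      intro s hs hle
      rw [Finsupp.le_def] at hle
      simp only [SI, Set.mem_insert_iff, Set.mem_singleton_iff] at hs
      have g0 := hle 0; have g1 := hle 1; have g2 := hle 2; have g3 := hle 3
      rcases hs with rfl|rfl|rfl|rfl|rfl|rfl <;>
        simp [Finsupp.single_apply, Finsupp.add_apply] at g0 g1 g2 g3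
  have e2 : coeff (single 1 1) p = 0 := by
    have h := key (single 1 1 + single 2 1) ?_
    · rw [mul_sub, coeff_sub, coeff_mul_X', coeff_mul_X'] at h
      simp only [Finsupp.mem_support_iff, Finsupp.add_apply, Finsupp.single_apply] at h
      simpa using h
    · apply nond
      intro s hs hle
      rw [Finsupp.le_def] at hle
      simp only [SI, Set.mem_insert_iff, Set.mem_singleton_iff] at hs
      have g0 := hle 0; have g1 := hle 1; have g2 := hle 2; have g3 := hle 3
      rcases hs with rfl|rfl|rfl|rfl|rfl|rfl <;>
        simp [Finsupp.single_apply, Finsupp.add_apply] at g0 g1 g2 g3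
  have e4 : coeff (single 3 1) p = 0 := by
    have h := key (single 0 1 + single 3 1) ?_
    · rw [mul_sub, coeff_sub, coeff_mul_X', coeff_mul_X'] at h
      simp only [Finsupp.mem_support_iff, Finsupp.add_apply, Finsupp.single_apply] at h
      simpa using h
    · apply nond
      intro s hs hle
      rw [Finsupp.le_def] at hle
      simp only [SI, Set.mem_insert_iff, Set.mem_singleton_iff] at hs
      have g0 := hle 0; have g1 := hle 1; have g2 := hle 2; have g3 := hle 3
      rcases hs with rfl|rfl|rfl|rfl|rfl|rfl <;>
        simp [Finsupp.single_apply, Finsupp.add_apply] at g0 g1 g2 g3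
  -- split off the linear part
  set c := coeff (single 0 1) p with hc
  have hq : p = (p - C c * (X 0 + X 2)) + C c * (X 0 + X 2) := by ring
  rw [hq]
  refine Ideal.add_mem _ ?_ (Ideal.mul_mem_left _ _
    (Ideal.mem_sup_left (Ideal.subset_span (by simp))))
  refine sq_le_plus (mem_sq _ ?_ ?_)
  · simp [coeff_C_mul, coeff_X', e0, Finsupp.single_eq_zero]
  · intro i
    fin_cases i <;>
      simp [coeff_C_mul, coeff_X', e13, e2, e4, Finsupp.single_left_inj, ← hc]

/-- key lemma B: annihilator of x + z. -/
lemma keyB (p : MvPolynomial (Fin 4) k) (H : p * (X 0 + X 2) ∈ roosIdeal k) :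
    p ∈ Ideal.span {X 1 * X 3, X 0 - X 2} ⊔ roosIdeal k := by
  rw [roos_eq, mem_ideal_span_monomial_image] at H
  have key : ∀ m, (¬ ∃ s ∈ SI, s ≤ m) → coeff m (p * (X 0 + X 2)) = 0 := by
    intro m hm
    by_contra h
    exact hm (H m (MvPolynomial.mem_support_iff.mpr h))
  have nond : ∀ m : Fin 4 →₀ ℕ,
      (∀ s ∈ SI, ¬ s ≤ m) → (¬ ∃ s ∈ SI, s ≤ m) := by
    rintro m h ⟨s, hs, hle⟩; exact h s hs hle
  have e0 : coeff 0 p = 0 := by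
    have h := key (single 0 1) ?_
    · rw [mul_add, coeff_add, coeff_mul_X', coeff_mul_X'] at h
      simp only [Finsupp.mem_support_iff, Finsupp.single_apply] at h
      simpa using h
    · apply nond
      intro s hs hle
      rw [Finsupp.le_def] at hle
      simp only [SI, Set.mem_insert_iff, Set.mem_singleton_iff] at hs
      have g0 := hle 0; have g1 := hle 1; have g2 := hle 2; have g3 := hle 3
      rcases hs with rfl|rfl|rfl|rfl|rfl|rfl <;>
        simp [Finsupp.single_apply, Finsupp.add_apply] at g0 g1 g2 g3
  have e13 : coeff (single 2 1) p = -coeff (single 0 1) p := by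
    have h := key (single 0 1 + single 2 1) ?_
    · rw [mul_add, coeff_add, coeff_mul_X', coeff_mul_X'] at h
      simp only [Finsupp.mem_support_iff, Finsupp.add_apply, Finsupp.single_apply] at h
      simp at h
      exact eq_neg_of_add_eq_zero_left h
    · apply nond
      intro s hs hle
      rw [Finsupp.le_def] at hle
      simp only [SI, Set.mem_insert_iff, Set.mem_singleton_iff] at hs
      have g0 := hle 0; have g1 := hle 1; have g2 := hle 2; have g3 := hle 3
      rcases hs with rfl|rfl|rfl|rfl|rfl|rfl <;>
        simp [Finsupp.single_apply, Finsupp.add_apply] at g0 g1 g2 g3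
  have e2 : coeff (single 1 1) p = 0 := by
    have h := key (single 1 1 + single 2 1) ?_
    · rw [mul_add, coeff_add, coeff_mul_X', coeff_mul_X'] at h
      simp only [Finsupp.mem_support_iff, Finsupp.add_apply, Finsupp.single_apply] at h
      simpa using h
    · apply nond
      intro s hs hle
      rw [Finsupp.le_def] at hle
      simp only [SI, Set.mem_insert_iff, Set.mem_singleton_iff] at hs
      have g0 := hle 0; have g1 := hle 1; have g2 := hle 2; have g3 := hle 3
      rcases hs with rfl|rfl|rfl|rfl|rfl|rfl <;>
        simp [Finsupp.single_apply, Finsupp.add_apply] at g0 g1 g2 g3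
  have e4 : coeff (single 3 1) p = 0 := by
    have h := key (single 0 1 + single 3 1) ?_
    · rw [mul_add, coeff_add, coeff_mul_X', coeff_mul_X'] at h
      simp only [Finsupp.mem_support_iff, Finsupp.add_apply, Finsupp.single_apply] at h
      simpa using h
    · apply nond
      intro s hs hle
      rw [Finsupp.le_def] at hle
      simp only [SI, Set.mem_insert_iff, Set.mem_singleton_iff] at hs
      have g0 := hle 0; have g1 := hle 1; have g2 := hle 2; have g3 := hle 3
      rcases hs with rfl|rfl|rfl|rfl|rfl|rfl <;>
        simp [Finsupp.single_apply, Finsupp.add_apply] at g0 g1 g2 g3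
  set c := coeff (single 0 1) p with hc
  have hq : p = (p - C c * (X 0 - X 2)) + C c * (X 0 - X 2) := by ring
  rw [hq]
  refine Ideal.add_mem _ ?_ (Ideal.mul_mem_left _ _
    (Ideal.mem_sup_left (Ideal.subset_span (by simp))))
  refine sq_le_minus (mem_sq _ ?_ ?_)
  · simp [coeff_C_mul, coeff_X', e0, Finsupp.single_eq_zero]
  · intro i
    fin_cases i <;>
      simp [coeff_C_mul, coeff_X', e13, e2, e4, Finsupp.single_left_inj, ← hc]

lemma memI1 : ((X 0 - X 2) * (X 0 + X 2) : MvPolynomial (Fin 4) k) ∈ roosIdeal k := by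
  have h : ((X 0 - X 2) * (X 0 + X 2) : MvPolynomial (Fin 4) k) = X 0 ^ 2 - X 2 ^ 2 := by ring
  rw [h]
  exact Ideal.sub_mem _ (Ideal.subset_span (by simp)) (Ideal.subset_span (by simp))

lemma memI2 : ((X 1 * X 3) * (X 0 - X 2) : MvPolynomial (Fin 4) k) ∈ roosIdeal k := by
  have h : ((X 1 * X 3) * (X 0 - X 2) : MvPolynomial (Fin 4) k)
      = X 3 * (X 0 * X 1) - X 1 * (X 2 * X 3) := by ring
  rw [h]
  exact Ideal.sub_mem _ (Ideal.mul_mem_left _ _ (Ideal.subset_span (by simp)))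
    (Ideal.mul_mem_left _ _ (Ideal.subset_span (by simp)))

lemma memI3 : ((X 1 * X 3) * (X 0 + X 2) : MvPolynomial (Fin 4) k) ∈ roosIdeal k := by
  have h : ((X 1 * X 3) * (X 0 + X 2) : MvPolynomial (Fin 4) k)
      = X 3 * (X 0 * X 1) + X 1 * (X 2 * X 3) := by ring
  rw [h]
  exact Ideal.add_mem _ (Ideal.mul_mem_left _ _ (Ideal.subset_span (by simp)))
    (Ideal.mul_mem_left _ _ (Ideal.subset_span (by simp)))

end RoosAux

open RoosAux in
theorem stmt_0 (k : Type*) [Field k] :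
    (rv k 0 - rv k 2) * (rv k 0 + rv k 2) = 0 ∧
    Submodule.colon (⊥ : Ideal (RoosRing k)) (Ideal.span {rv k 0 - rv k 2}) =
      Ideal.span {rv k 1 * rv k 3, rv k 0 + rv k 2} ∧
    Submodule.colon (⊥ : Ideal (RoosRing k)) (Ideal.span {rv k 0 + rv k 2}) =
      Ideal.span {rv k 1 * rv k 3, rv k 0 - rv k 2} := by
  have hmul : ∀ a b : MvPolynomial (Fin 4) k, a * b ∈ roosIdeal k →
      Ideal.Quotient.mk (roosIdeal k) a * Ideal.Quotient.mk (roosIdeal k) b = 0 := by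
    intro a b h
    rw [← map_mul, Ideal.Quotient.eq_zero_iff_mem]
    exact h
  have hrvsub : rv k 0 - rv k 2 = Ideal.Quotient.mk (roosIdeal k) (X 0 - X 2) := by
    rw [rv, rv, map_sub]
  have hrvadd : rv k 0 + rv k 2 = Ideal.Quotient.mk (roosIdeal k) (X 0 + X 2) := by
    rw [rv, rv, map_add]
  have hrvmul : rv k 1 * rv k 3 = Ideal.Quotient.mk (roosIdeal k) (X 1 * X 3) := by
    rw [rv, rv, map_mul]
  have hspan : ∀ w : MvPolynomial (Fin 4) k,
      Ideal.span {rv k 1 * rv k 3, Ideal.Quotient.mk (roosIdeal k) w} =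
        Ideal.map (Ideal.Quotient.mk (roosIdeal k)) (Ideal.span {X 1 * X 3, w}) := by
    intro w
    rw [Ideal.map_span, Set.image_insert_eq, Set.image_singleton, hrvmul]
  refine ⟨?_, ?_, ?_⟩
  · rw [hrvsub, hrvadd]
    exact hmul _ _ memI1
  · ext a
    rw [hrvsub, hrvadd, Ideal.mem_colon_span_singleton, Submodule.mem_bot, hspan]
    obtain ⟨p, rfl⟩ := Ideal.Quotient.mk_surjective a
    rw [← map_mul, Ideal.Quotient.eq_zero_iff_mem, Ideal.mem_quotient_iff_mem_sup]
    constructor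
    · exact keyA p
    · intro h
      obtain ⟨j, hj, i, hi, rfl⟩ := Submodule.mem_sup.mp h
      rw [add_mul]
      refine Ideal.add_mem _ ?_ (Ideal.mul_mem_right _ _ hi)
      obtain ⟨u, v, rfl⟩ := Ideal.mem_span_pair.mp hj
      have hid : (u * (X 1 * X 3) + v * (X 0 + X 2)) * (X 0 - X 2)
          = u * ((X 1 * X 3) * (X 0 - X 2)) + v * ((X 0 - X 2) * (X 0 + X 2)) := by ring
      rw [hid]
      exact Ideal.add_mem _ (Ideal.mul_mem_left _ _ memI2) (Ideal.mul_mem_left _ _ memI1)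
  · ext a
    rw [hrvsub, hrvadd, Ideal.mem_colon_span_singleton, Submodule.mem_bot, hspan]
    obtain ⟨p, rfl⟩ := Ideal.Quotient.mk_surjective a
    rw [← map_mul, Ideal.Quotient.eq_zero_iff_mem, Ideal.mem_quotient_iff_mem_sup]
    constructor
    · exact keyB p
    · intro h
      obtain ⟨j, hj, i, hi, rfl⟩ := Submodule.mem_sup.mp h
      rw [add_mul]
      refine Ideal.add_mem _ ?_ (Ideal.mul_mem_right _ _ hi)
      obtain ⟨u, v, rfl⟩ := Ideal.mem_span_pair.mp hj
      have hid : (u * (X 1 * X 3) + v * (X 0 - X 2)) * (X 0 + X 2)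
          = u * ((X 1 * X 3) * (X 0 + X 2)) + v * ((X 0 - X 2) * (X 0 + X 2)) := by ring
      rw [hid]
      exact Ideal.add_mem _ (Ideal.mul_mem_left _ _ memI3) (Ideal.mul_mem_left _ _ memI1)
end
end

section
/- In the ring R = k[x,y,z,u]/(x²,xy,y²,z²,zu,u²), the principal ideals satisfy (yu) ∩ (x−z) = (0) and (yu) ∩ (x+z) = (0). -/
open MvPolynomial

noncomputable section

def roosExps : Set (Fin 4 →₀ ℕ) :=
  {(Finsupp.single 0 1 + Finsupp.single 0 1 : Fin 4 →₀ ℕ), Finsupp.single 0 1 + Finsupp.single 1 1, (Finsupp.single 1 1 + Finsupp.single 1 1 : Fin 4 →₀ ℕ),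
   (Finsupp.single 2 1 + Finsupp.single 2 1 : Fin 4 →₀ ℕ), Finsupp.single 2 1 + Finsupp.single 3 1, (Finsupp.single 3 1 + Finsupp.single 3 1 : Fin 4 →₀ ℕ)}

lemma roosIdeal_eq (k : Type*) [Field k] :
    roosIdeal k = Ideal.span ((fun s => monomial s (1 : k)) '' roosExps) := by
  rw [roosIdeal, roosExps]
  congr 1
  simp only [Set.image_insert_eq, Set.image_singleton, sq, X, monomial_mul, one_mul]

lemma mem_roosIdeal_iff {k : Type*} [Field k] {p : MvPolynomial (Fin 4) k} :
    p ∈ roosIdeal k ↔ ∀ d ∈ p.support, ∃ s ∈ roosExps, s ≤ d := by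
  rw [roosIdeal_eq, mem_ideal_span_monomial_image]

def yuExp : Fin 4 →₀ ℕ := Finsupp.single 1 1 + Finsupp.single 3 1

lemma X1_mul_X3 (k : Type*) [Field k] :
    (X 1 * X 3 : MvPolynomial (Fin 4) k) = monomial yuExp 1 := by
  rw [yuExp, X, X, monomial_mul, one_mul]

lemma coeff_yu_of_mem {k : Type*} [Field k] {p : MvPolynomial (Fin 4) k}
    (hp : p ∈ roosIdeal k) : coeff yuExp p = 0 := by
  by_contra h
  obtain ⟨s, hs, hle⟩ := mem_roosIdeal_iff.mp hp yuExp (mem_support_iff.mpr h)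
  have h0 := hle 0
  have h1 := hle 1
  have h2 := hle 2
  have h3 := hle 3
  simp only [yuExp, roosExps, Set.mem_insert_iff, Set.mem_singleton_iff] at hs h0 h1 h2 h3
  rcases hs with rfl|rfl|rfl|rfl|rfl|rfl <;>
    simp_all [Finsupp.single_apply]

lemma mul_yu_mem {k : Type*} [Field k] {A : MvPolynomial (Fin 4) k}
    (hA : coeff 0 A = 0) : A * (X 1 * X 3) ∈ roosIdeal k := by
  rw [X1_mul_X3, mem_roosIdeal_iff]
  intro d hd
  rw [mem_support_iff, coeff_mul_monomial'] at hd
  split_ifs at hd with hle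
  · rw [mul_one] at hd
    have hne : d - yuExp ≠ 0 := by rintro h; rw [h] at hd; exact hd hA
    obtain ⟨i, hi⟩ := Finsupp.ne_iff.mp hne
    rw [Finsupp.coe_tsub, Pi.sub_apply, Finsupp.coe_zero, Pi.zero_apply] at hi
    have hm1 : yuExp (1:Fin 4) = 1 := by simp [yuExp]
    have hm3 : yuExp (3:Fin 4) = 1 := by simp [yuExp]
    have hd1 : 1 ≤ d 1 := le_trans (by rw [hm1]) (hle 1)
    have hd3 : 1 ≤ d 3 := le_trans (by rw [hm3]) (hle 3)
    fin_cases i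
    · refine ⟨Finsupp.single 0 1 + Finsupp.single 1 1, by simp [roosExps], ?_⟩
      intro j
      fin_cases j <;>
        simp_all [Finsupp.single_apply, yuExp] <;> omega
    · refine ⟨Finsupp.single 1 1 + Finsupp.single 1 1, by simp [roosExps], ?_⟩
      intro j
      fin_cases j <;>
        simp_all [Finsupp.single_apply, yuExp] <;> omega
    · refine ⟨Finsupp.single 2 1 + Finsupp.single 3 1, by simp [roosExps], ?_⟩
      intro j
      fin_cases j <;>
        simp_all [Finsupp.single_apply, yuExp] <;> omega
    · refine ⟨Finsupp.single 3 1 + Finsupp.single 3 1, by simp [roosExps], ?_⟩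
      intro j
      fin_cases j <;>
        simp_all [Finsupp.single_apply, yuExp] <;> omega
  · exact absurd rfl hd

lemma key {k : Type*} [Field k] (P : MvPolynomial (Fin 4) k)
    (hP : ∀ B : MvPolynomial (Fin 4) k, coeff yuExp (B * P) = 0) :
    Ideal.span {rv k 1 * rv k 3} ⊓
      Ideal.span {Ideal.Quotient.mk (roosIdeal k) P} = (⊥ : Ideal (RoosRing k)) := by
  rw [eq_bot_iff]
  intro r hr
  obtain ⟨a, ha⟩ := Ideal.mem_span_singleton'.mp hr.1
  obtain ⟨b, hb⟩ := Ideal.mem_span_singleton'.mp hr.2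
  obtain ⟨A, rfl⟩ := Ideal.Quotient.mk_surjective a
  obtain ⟨B, rfl⟩ := Ideal.Quotient.mk_surjective b
  have hrv : rv k 1 * rv k 3 = Ideal.Quotient.mk (roosIdeal k) (X 1 * X 3) := by
    rw [rv, rv, map_mul]
  rw [hrv, ← map_mul] at ha
  rw [← map_mul] at hb
  have hmem : A * (X 1 * X 3) - B * P ∈ roosIdeal k := by
    rw [← Ideal.Quotient.eq_zero_iff_mem, map_sub, ha, hb, sub_self]
  have hc := coeff_yu_of_mem hmem
  rw [coeff_sub, hP B, sub_zero, X1_mul_X3, coeff_mul_monomial', if_pos le_rfl,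
    tsub_self, mul_one] at hc
  have : A * (X 1 * X 3) ∈ roosIdeal k := mul_yu_mem hc
  rw [Ideal.mem_bot, ← ha, Ideal.Quotient.eq_zero_iff_mem]
  exact this

theorem stmt_1 (k : Type*) [Field k] :
    Ideal.span {rv k 1 * rv k 3} ⊓ Ideal.span {rv k 0 - rv k 2} = (⊥ : Ideal (RoosRing k)) ∧
    Ideal.span {rv k 1 * rv k 3} ⊓ Ideal.span {rv k 0 + rv k 2} = (⊥ : Ideal (RoosRing k)) := by
  have h02 : ∀ (s : Fin 4) (B : MvPolynomial (Fin 4) k), coeff yuExp (B * X s) =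
      if s ∈ yuExp.support then coeff (yuExp - Finsupp.single s 1) B else 0 :=
    fun s B => coeff_mul_X' _ _ _
  have h0 : (0 : Fin 4) ∉ yuExp.support := by simp [yuExp, Finsupp.single_apply]
  have h2 : (2 : Fin 4) ∉ yuExp.support := by
    simp [yuExp, Finsupp.single_apply]
  constructor
  · rw [show rv k 0 - rv k 2 = Ideal.Quotient.mk (roosIdeal k) (X 0 - X 2) from (map_sub _ _ _).symm]
    exact key (k := k) (X 0 - X 2) (fun B => by
      rw [mul_sub, coeff_sub, h02, h02, if_neg h0, if_neg h2, sub_zero])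
  · rw [show rv k 0 + rv k 2 = Ideal.Quotient.mk (roosIdeal k) (X 0 + X 2) from (map_add _ _ _).symm]
    exact key (k := k) (X 0 + X 2) (fun B => by
      rw [mul_add, coeff_add, h02, h02, if_neg h0, if_neg h2, add_zero])
end
end

section
/- Let U = ℚ[a₁,…,a₁₂]/H, where H is the ideal generated by the 2×2 minors of the 4×5 matrix with rows (0, a₁, a₂+a₅, a₃+a₆+a₉, a₄+a₇+a₁₀), (a₁, a₂, a₃, a₄, a₈+a₁₁), (a₅, a₆, a₇, a₈, a₁₂), (a₉, a₁₀, a₁₁, a₁₂, 0). Consider the ideals I₇=(a₁₂,a₁₁,a₁₀,a₉,a₈,a₇,a₄), I₈=(a₁₂,…,a₇,a₄,a₆+a₃), I₉=(a₁₂,…,a₆,a₄,a₃), I₁₀=(a₁₂,…,a₆,a₅+a₂,a₄,a₃), I₁₁=(a₁₂,…,a₂), I₁₂=(a₁₂,…,a₃), I₁₃=(a₁₂,…,a₆,a₄), I₁₄=(a₁₂,…,a₄), and the maximal ideal 𝔪=(a₁,…,a₁₂). Then: (I₈ : I₉) = I₁₁, (I₉ : I₁₀) = 𝔪, (I₁₀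 : I₁₁) = 𝔪, (I₉ : I₁₂) = 𝔪, (I₇ : I₁₃) = I₁₁, (I₁₃ : I₁₄) = 𝔪, and (I₁₁ : 𝔪) = 𝔪. -/
open MvPolynomial

set_option synthInstance.maxHeartbeats 1000000
set_option maxHeartbeats 1000000

noncomputable section

/-- The 4×5 matrix with rows `(0, a₁, a₂+a₅, a₃+a₆+a₉, a₄+a₇+a₁₀)`,
`(a₁, a₂, a₃, a₄, a₈+a₁₁)`, `(a₅, a₆, a₇, a₈, a₁₂)`, `(a₉, a₁₀, a₁₁, a₁₂, 0)`,
where `aᵢ = X (i-1)`. -/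
def segMat45 : Matrix (Fin 4) (Fin 5) (MvPolynomial (Fin 12) ℚ) :=
  !![0, X 0, X 1 + X 4, X 2 + X 5 + X 8, X 3 + X 6 + X 9;
     X 0, X 1, X 2, X 3, X 7 + X 10;
     X 4, X 5, X 6, X 7, X 11;
     X 8, X 9, X 10, X 11, 0]

/-- The ideal `H` generated by the 2×2 minors of `segMat45`. -/
def segIdeal45 : Ideal (MvPolynomial (Fin 12) ℚ) :=
  Ideal.span {p | ∃ (i i' : Fin 4) (j j' : Fin 5), i < i' ∧ j < j' ∧
    p = segMat45 i j * segMat45 i' j' - segMat45 i j' * segMat45 i' j}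

/-- The artinian reduction `U = ℚ[a₁,…,a₁₂]/H` of the Segre product `S_{4,5}`. -/
abbrev SegU45 := MvPolynomial (Fin 12) ℚ ⧸ segIdeal45

/-- The residue class of `a_{i+1} = X i` in `U` (zero-based index). -/
def va (i : Fin 12) : SegU45 := Ideal.Quotient.mk segIdeal45 (X i)

def KI₁ : Ideal SegU45 := Ideal.span {va 11}
def KI₂ : Ideal SegU45 := Ideal.span {va 11, va 10}
def KI₃ : Ideal SegU45 := Ideal.span {va 11, va 10, va 9}
def KI₄ : Ideal SegU45 := Ideal.span {va 11, va 10, va 9, va 8}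
def KI₅ : Ideal SegU45 := Ideal.span {va 11, va 10, va 9, va 8, va 7}
def KI₆ : Ideal SegU45 := Ideal.span {va 11, va 10, va 9, va 8, va 7, va 6 + va 3}
def KI₇ : Ideal SegU45 := Ideal.span {va 11, va 10, va 9, va 8, va 7, va 6, va 3}
def KI₈ : Ideal SegU45 :=
  Ideal.span {va 11, va 10, va 9, va 8, va 7, va 6, va 3, va 5 + va 2}
def KI₉ : Ideal SegU45 :=
  Ideal.span {va 11, va 10, va 9, va 8, va 7, va 6, va 5, va 3, va 2}
def KI₁₀ : Ideal SegU45 :=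
  Ideal.span {va 11, va 10, va 9, va 8, va 7, va 6, va 5, va 4 + va 1, va 3, va 2}
def KI₁₁ : Ideal SegU45 :=
  Ideal.span {va 11, va 10, va 9, va 8, va 7, va 6, va 5, va 4, va 3, va 2, va 1}
def KI₁₂ : Ideal SegU45 :=
  Ideal.span {va 11, va 10, va 9, va 8, va 7, va 6, va 5, va 4, va 3, va 2}
def KI₁₃ : Ideal SegU45 := Ideal.span {va 11, va 10, va 9, va 8, va 7, va 6, va 5, va 3}
def KI₁₄ : Ideal SegU45 :=
  Ideal.span {va 11, va 10, va 9, va 8, va 7, va 6, va 5, va 4, va 3}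
def Km : Ideal SegU45 := Ideal.span (Set.range va)


/-! ### Auxiliary 6-dimensional commutative algebra `W6` -/

@[ext] structure W6 : Type where
  a : ℚ
  b0 : ℚ
  b2 : ℚ
  b4 : ℚ
  bs : ℚ
  c : ℚ

namespace W6

instance : Zero W6 := ⟨⟨0,0,0,0,0,0⟩⟩
instance : One W6 := ⟨⟨1,0,0,0,0,0⟩⟩
instance : Add W6 := ⟨fun x y => ⟨x.a+y.a, x.b0+y.b0, x.b2+y.b2, x.b4+y.b4, x.bs+y.bs, x.c+y.c⟩⟩
instance : Neg W6 := ⟨fun x => ⟨-x.a, -x.b0, -x.b2, -x.b4, -x.bs, -x.c⟩⟩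
instance : Mul W6 := ⟨fun x y => ⟨x.a*y.a,
  x.a*y.b0 + y.a*x.b0, x.a*y.b2 + y.a*x.b2, x.a*y.b4 + y.a*x.b4, x.a*y.bs + y.a*x.bs,
  x.a*y.c + y.a*x.c + x.b0*y.b2 + x.b2*y.b0 + x.b4*y.b4 + x.bs*y.bs⟩⟩

@[simp] lemma zero_a : (0:W6).a = 0 := rfl
@[simp] lemma zero_b0 : (0:W6).b0 = 0 := rfl
@[simp] lemma zero_b2 : (0:W6).b2 = 0 := rfl
@[simp] lemma zero_b4 : (0:W6).b4 = 0 := rfl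
@[simp] lemma zero_bs : (0:W6).bs = 0 := rfl
@[simp] lemma zero_c : (0:W6).c = 0 := rfl
@[simp] lemma one_a : (1:W6).a = 1 := rfl
@[simp] lemma one_b0 : (1:W6).b0 = 0 := rfl
@[simp] lemma one_b2 : (1:W6).b2 = 0 := rfl
@[simp] lemma one_b4 : (1:W6).b4 = 0 := rfl
@[simp] lemma one_bs : (1:W6).bs = 0 := rfl
@[simp] lemma one_c : (1:W6).c = 0 := rfl
@[simp] lemma add_a (x y : W6) : (x+y).a = x.a+y.a := rfl
@[simp] lemma add_b0 (x y : W6) : (x+y).b0 = x.b0+y.b0 := rfl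
@[simp] lemma add_b2 (x y : W6) : (x+y).b2 = x.b2+y.b2 := rfl
@[simp] lemma add_b4 (x y : W6) : (x+y).b4 = x.b4+y.b4 := rfl
@[simp] lemma add_bs (x y : W6) : (x+y).bs = x.bs+y.bs := rfl
@[simp] lemma add_c (x y : W6) : (x+y).c = x.c+y.c := rfl
@[simp] lemma neg_a (x : W6) : (-x).a = -x.a := rfl
@[simp] lemma neg_b0 (x : W6) : (-x).b0 = -x.b0 := rfl
@[simp] lemma neg_b2 (x : W6) : (-x).b2 = -x.b2 := rfl
@[simp] lemma neg_b4 (x : W6) : (-x).b4 = -x.b4 := rfl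
@[simp] lemma neg_bs (x : W6) : (-x).bs = -x.bs := rfl
@[simp] lemma neg_c (x : W6) : (-x).c = -x.c := rfl
@[simp] lemma mul_a (x y : W6) : (x*y).a = x.a*y.a := rfl
@[simp] lemma mul_b0 (x y : W6) : (x*y).b0 = x.a*y.b0 + y.a*x.b0 := rfl
@[simp] lemma mul_b2 (x y : W6) : (x*y).b2 = x.a*y.b2 + y.a*x.b2 := rfl
@[simp] lemma mul_b4 (x y : W6) : (x*y).b4 = x.a*y.b4 + y.a*x.b4 := rfl
@[simp] lemma mul_bs (x y : W6) : (x*y).bs = x.a*y.bs + y.a*x.bs := rfl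
@[simp] lemma mul_c (x y : W6) : (x*y).c
    = x.a*y.c + y.a*x.c + x.b0*y.b2 + x.b2*y.b0 + x.b4*y.b4 + x.bs*y.bs := rfl

instance : CommRing W6 where
  add := (· + ·)
  zero := 0
  neg := Neg.neg
  mul := (· * ·)
  one := 1
  add_assoc x y z := by ext <;> simp <;> ring
  zero_add x := by ext <;> simp
  add_zero x := by ext <;> simp
  add_comm x y := by ext <;> simp <;> ring
  neg_add_cancel x := by ext <;> simp
  mul_assoc x y z := by ext <;> simp <;> ring
  one_mul x := by ext <;> simp
  mul_one x := by ext <;> simp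
  left_distrib x y z := by ext <;> simp <;> ring
  right_distrib x y z := by ext <;> simp <;> ring
  zero_mul x := by ext <;> simp
  mul_zero x := by ext <;> simp
  mul_comm x y := by ext <;> simp <;> ring
  nsmul := nsmulRec
  zsmul := zsmulRec


@[simp] lemma sub_a (x y : W6) : (x-y).a = x.a - y.a := by
  rw [sub_eq_add_neg, add_a, neg_a, sub_eq_add_neg]
@[simp] lemma sub_b0 (x y : W6) : (x-y).b0 = x.b0 - y.b0 := by
  rw [sub_eq_add_neg, add_b0, neg_b0, sub_eq_add_neg]
@[simp] lemma sub_b2 (x y : W6) : (x-y).b2 = x.b2 - y.b2 := by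
  rw [sub_eq_add_neg, add_b2, neg_b2, sub_eq_add_neg]
@[simp] lemma sub_b4 (x y : W6) : (x-y).b4 = x.b4 - y.b4 := by
  rw [sub_eq_add_neg, add_b4, neg_b4, sub_eq_add_neg]
@[simp] lemma sub_bs (x y : W6) : (x-y).bs = x.bs - y.bs := by
  rw [sub_eq_add_neg, add_bs, neg_bs, sub_eq_add_neg]
@[simp] lemma sub_c (x y : W6) : (x-y).c = x.c - y.c := by
  rw [sub_eq_add_neg, add_c, neg_c, sub_eq_add_neg]

def toW : ℚ →+* W6 where
  toFun q := ⟨q,0,0,0,0,0⟩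
  map_one' := rfl
  map_mul' x y := by ext <;> simp
  map_zero' := rfl
  map_add' x y := by ext <;> simp

@[simp] lemma toW_a (q : ℚ) : (toW q).a = q := rfl
@[simp] lemma toW_b0 (q : ℚ) : (toW q).b0 = 0 := rfl
@[simp] lemma toW_b2 (q : ℚ) : (toW q).b2 = 0 := rfl
@[simp] lemma toW_b4 (q : ℚ) : (toW q).b4 = 0 := rfl
@[simp] lemma toW_bs (q : ℚ) : (toW q).bs = 0 := rfl
@[simp] lemma toW_c (q : ℚ) : (toW q).c = 0 := rfl

def e0 : W6 := ⟨0,1,0,0,0,0⟩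
def e2 : W6 := ⟨0,0,1,0,0,0⟩
def e4 : W6 := ⟨0,0,0,1,0,0⟩
def es : W6 := ⟨0,0,0,0,1,0⟩
def t6 : W6 := ⟨0,0,0,0,0,1⟩

/-- The ring-hom projection onto the constant coordinate. -/
def aProj : W6 →+* ℚ where
  toFun x := x.a
  map_one' := rfl
  map_mul' x y := rfl
  map_zero' := rfl
  map_add' x y := rfl

lemma pair (p q r s p' q' r' s' : ℚ) :
    (toW p * e0 + toW q * e2 + toW r * e4 + toW s * es) *
      (toW p' * e0 + toW q' * e2 + toW r' * e4 + toW s' * es)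
    = toW (p*q' + q*p' + r*r' + s*s') * t6 := by
  ext <;> simp [e0, e2, e4, es, t6] <;> ring

lemma ann_e2 (w : W6) (h : w * e2 = 0) : w.a = 0 := by
  have := congrArg W6.b2 h
  simpa [e2] using this

lemma e0_mul_e2_ne : e0 * e2 ≠ 0 := by
  intro h
  have := congrArg W6.c h
  simp [e0, e2] at this

end W6

open W6 in
/-- Value matrix built from four integer coefficient matrices. -/
def Vmk (A B C D : Matrix (Fin 4) (Fin 5) ℤ) (i : Fin 4) (j : Fin 5) : W6 :=
  toW (A i j : ℚ) * e0 + toW (B i j : ℚ) * e2 + toW (C i j : ℚ) * e4 + toW (D i j : ℚ) * es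

open W6 in
lemma Vmk_minor (A B C D : Matrix (Fin 4) (Fin 5) ℤ)
    (hZ : ∀ (i i' : Fin 4) (j j' : Fin 5),
      A i j * B i' j' + B i j * A i' j' + C i j * C i' j' + D i j * D i' j'
      = A i j' * B i' j + B i j' * A i' j + C i j' * C i' j + D i j' * D i' j)
    (i i' : Fin 4) (j j' : Fin 5) :
    Vmk A B C D i j * Vmk A B C D i' j' - Vmk A B C D i j' * Vmk A B C D i' j = 0 := by
  rw [Vmk, Vmk, Vmk, Vmk, pair, pair]
  have h : ((A i j : ℚ) * B i' j' + B i j * A i' j' + C i j * C i' j' + D i j * D i' j')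
      = ((A i j' : ℚ) * B i' j + B i j' * A i' j + C i j' * C i' j + D i j' * D i' j) := by
    exact_mod_cast congrArg (fun n : ℤ => (n : ℚ)) (hZ i i' j j')
  rw [h, sub_self]

open W6 in
lemma seg_le_kerW (f : MvPolynomial (Fin 12) ℚ →+* W6) (A B C D : Matrix (Fin 4) (Fin 5) ℤ)
    (hZ : ∀ (i i' : Fin 4) (j j' : Fin 5),
      A i j * B i' j' + B i j * A i' j' + C i j * C i' j' + D i j * D i' j'
      = A i j' * B i' j + B i j' * A i' j + C i j' * C i' j + D i j' * D i' j)
    (hV : ∀ i j, f (segMat45 i j) = Vmk A B C D i j) :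
    segIdeal45 ≤ RingHom.ker f := by
  rw [segIdeal45, Ideal.span_le]
  rintro p ⟨i, i', j, j', -, -, rfl⟩
  simp only [SetLike.mem_coe, RingHom.mem_ker, map_sub, map_mul, hV]
  exact Vmk_minor A B C D hZ i i' j j'

/-! entry lemmas for `segMat45` -/
lemma segE00 : segMat45 0 0 = 0 := rfl
lemma segE01 : segMat45 0 1 = X 0 := rfl
lemma segE02 : segMat45 0 2 = X 1 + X 4 := rfl
lemma segE03 : segMat45 0 3 = X 2 + X 5 + X 8 := rfl
lemma segE04 : segMat45 0 4 = X 3 + X 6 + X 9 := rfl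
lemma segE10 : segMat45 1 0 = X 0 := rfl
lemma segE11 : segMat45 1 1 = X 1 := rfl
lemma segE12 : segMat45 1 2 = X 2 := rfl
lemma segE13 : segMat45 1 3 = X 3 := rfl
lemma segE14 : segMat45 1 4 = X 7 + X 10 := rfl
lemma segE20 : segMat45 2 0 = X 4 := rfl
lemma segE21 : segMat45 2 1 = X 5 := rfl
lemma segE22 : segMat45 2 2 = X 6 := rfl
lemma segE23 : segMat45 2 3 = X 7 := rfl
lemma segE24 : segMat45 2 4 = X 11 := rfl
lemma segE30 : segMat45 3 0 = X 8 := rfl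
lemma segE31 : segMat45 3 1 = X 9 := rfl
lemma segE32 : segMat45 3 2 = X 10 := rfl
lemma segE33 : segMat45 3 3 = X 11 := rfl
lemma segE34 : segMat45 3 4 = 0 := rfl


open W6
def Z45 : Matrix (Fin 4) (Fin 5) ℤ := fun _ _ => 0
lemma Z45e (i : Fin 4) (j : Fin 5) : Z45 i j = 0 := rfl

/-! ### witness W -/
def ptW (k : Fin 12) : W6 := if k.val = 0 then e0 else if k.val = 1 then es - e4 else if k.val = 2 then e2 else if k.val = 4 then e4 else if k.val = 5 then -e2 else 0
lemma ptWv0 : ptW 0 = e0 := rfl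
lemma ptWv1 : ptW 1 = (es - e4) := rfl
lemma ptWv2 : ptW 2 = e2 := rfl
lemma ptWv3 : ptW 3 = 0 := rfl
lemma ptWv4 : ptW 4 = e4 := rfl
lemma ptWv5 : ptW 5 = (-e2) := rfl
lemma ptWv6 : ptW 6 = 0 := rfl
lemma ptWv7 : ptW 7 = 0 := rfl
lemma ptWv8 : ptW 8 = 0 := rfl
lemma ptWv9 : ptW 9 = 0 := rfl
lemma ptWv10 : ptW 10 = 0 := rfl
lemma ptWv11 : ptW 11 = 0 := rfl
def MAW : Matrix (Fin 4) (Fin 5) ℤ := fun i j => if i.val = 0 ∧ j.val = 1 then 1 else (if i.val = 1 ∧ j.val = 0 then 1 else (0))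
lemma MAWe00 : MAW 0 0 = 0 := rfl
lemma MAWe01 : MAW 0 1 = 1 := rfl
lemma MAWe02 : MAW 0 2 = 0 := rfl
lemma MAWe03 : MAW 0 3 = 0 := rfl
lemma MAWe04 : MAW 0 4 = 0 := rfl
lemma MAWe10 : MAW 1 0 = 1 := rfl
lemma MAWe11 : MAW 1 1 = 0 := rfl
lemma MAWe12 : MAW 1 2 = 0 := rfl
lemma MAWe13 : MAW 1 3 = 0 := rfl
lemma MAWe14 : MAW 1 4 = 0 := rfl
lemma MAWe20 : MAW 2 0 = 0 := rfl
lemma MAWe21 : MAW 2 1 = 0 := rfl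
lemma MAWe22 : MAW 2 2 = 0 := rfl
lemma MAWe23 : MAW 2 3 = 0 := rfl
lemma MAWe24 : MAW 2 4 = 0 := rfl
lemma MAWe30 : MAW 3 0 = 0 := rfl
lemma MAWe31 : MAW 3 1 = 0 := rfl
lemma MAWe32 : MAW 3 2 = 0 := rfl
lemma MAWe33 : MAW 3 3 = 0 := rfl
lemma MAWe34 : MAW 3 4 = 0 := rfl
def MBW : Matrix (Fin 4) (Fin 5) ℤ := fun i j => if i.val = 1 ∧ j.val = 2 then 1 else (if i.val = 2 ∧ j.val = 1 then -1 else (0))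
lemma MBWe00 : MBW 0 0 = 0 := rfl
lemma MBWe01 : MBW 0 1 = 0 := rfl
lemma MBWe02 : MBW 0 2 = 0 := rfl
lemma MBWe03 : MBW 0 3 = 0 := rfl
lemma MBWe04 : MBW 0 4 = 0 := rfl
lemma MBWe10 : MBW 1 0 = 0 := rfl
lemma MBWe11 : MBW 1 1 = 0 := rfl
lemma MBWe12 : MBW 1 2 = 1 := rfl
lemma MBWe13 : MBW 1 3 = 0 := rfl
lemma MBWe14 : MBW 1 4 = 0 := rfl
lemma MBWe20 : MBW 2 0 = 0 := rfl
lemma MBWe21 : MBW 2 1 = -1 := rfl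
lemma MBWe22 : MBW 2 2 = 0 := rfl
lemma MBWe23 : MBW 2 3 = 0 := rfl
lemma MBWe24 : MBW 2 4 = 0 := rfl
lemma MBWe30 : MBW 3 0 = 0 := rfl
lemma MBWe31 : MBW 3 1 = 0 := rfl
lemma MBWe32 : MBW 3 2 = 0 := rfl
lemma MBWe33 : MBW 3 3 = 0 := rfl
lemma MBWe34 : MBW 3 4 = 0 := rfl
def MCW : Matrix (Fin 4) (Fin 5) ℤ := fun i j => if i.val = 1 ∧ j.val = 1 then -1 else (if i.val = 2 ∧ j.val = 0 then 1 else (0))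
lemma MCWe00 : MCW 0 0 = 0 := rfl
lemma MCWe01 : MCW 0 1 = 0 := rfl
lemma MCWe02 : MCW 0 2 = 0 := rfl
lemma MCWe03 : MCW 0 3 = 0 := rfl
lemma MCWe04 : MCW 0 4 = 0 := rfl
lemma MCWe10 : MCW 1 0 = 0 := rfl
lemma MCWe11 : MCW 1 1 = -1 := rfl
lemma MCWe12 : MCW 1 2 = 0 := rfl
lemma MCWe13 : MCW 1 3 = 0 := rfl
lemma MCWe14 : MCW 1 4 = 0 := rfl
lemma MCWe20 : MCW 2 0 = 1 := rfl
lemma MCWe21 : MCW 2 1 = 0 := rfl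
lemma MCWe22 : MCW 2 2 = 0 := rfl
lemma MCWe23 : MCW 2 3 = 0 := rfl
lemma MCWe24 : MCW 2 4 = 0 := rfl
lemma MCWe30 : MCW 3 0 = 0 := rfl
lemma MCWe31 : MCW 3 1 = 0 := rfl
lemma MCWe32 : MCW 3 2 = 0 := rfl
lemma MCWe33 : MCW 3 3 = 0 := rfl
lemma MCWe34 : MCW 3 4 = 0 := rfl
def MDW : Matrix (Fin 4) (Fin 5) ℤ := fun i j => if i.val = 0 ∧ j.val = 2 then 1 else (if i.val = 1 ∧ j.val = 1 then 1 else (0))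
lemma MDWe00 : MDW 0 0 = 0 := rfl
lemma MDWe01 : MDW 0 1 = 0 := rfl
lemma MDWe02 : MDW 0 2 = 1 := rfl
lemma MDWe03 : MDW 0 3 = 0 := rfl
lemma MDWe04 : MDW 0 4 = 0 := rfl
lemma MDWe10 : MDW 1 0 = 0 := rfl
lemma MDWe11 : MDW 1 1 = 1 := rfl
lemma MDWe12 : MDW 1 2 = 0 := rfl
lemma MDWe13 : MDW 1 3 = 0 := rfl
lemma MDWe14 : MDW 1 4 = 0 := rfl
lemma MDWe20 : MDW 2 0 = 0 := rfl
lemma MDWe21 : MDW 2 1 = 0 := rfl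
lemma MDWe22 : MDW 2 2 = 0 := rfl
lemma MDWe23 : MDW 2 3 = 0 := rfl
lemma MDWe24 : MDW 2 4 = 0 := rfl
lemma MDWe30 : MDW 3 0 = 0 := rfl
lemma MDWe31 : MDW 3 1 = 0 := rfl
lemma MDWe32 : MDW 3 2 = 0 := rfl
lemma MDWe33 : MDW 3 3 = 0 := rfl
lemma MDWe34 : MDW 3 4 = 0 := rfl
def ψW : MvPolynomial (Fin 12) ℚ →+* W6 := (MvPolynomial.eval₂Hom toW ptW : _)
lemma ψW_X (k : Fin 12) : ψW (X k) = ptW k := by simp [ψW]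
lemma hZW : ∀ (i i' : Fin 4) (j j' : Fin 5),
    MAW i j * MBW i' j' + MBW i j * MAW i' j' + MCW i j * MCW i' j' + MDW i j * MDW i' j'
    = MAW i j' * MBW i' j + MBW i j' * MAW i' j + MCW i j' * MCW i' j + MDW i j' * MDW i' j := by
  decide
lemma hvW00 : ψW (segMat45 0 0) = Vmk MAW MBW MCW MDW 0 0 := by
  simp only [segE00, map_zero, Vmk, MAWe00, MBWe00, MCWe00, MDWe00]
  ext <;> norm_num [e0, e2, e4, es, toW]
lemma hvW01 : ψW (segMat45 0 1) = Vmk MAW MBW MCW MDW 0 1 := by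
  simp only [segE01, ψW_X, ptWv0, Vmk, MAWe01, MBWe01, MCWe01, MDWe01]
  ext <;> norm_num [e0, e2, e4, es, toW]
lemma hvW02 : ψW (segMat45 0 2) = Vmk MAW MBW MCW MDW 0 2 := by
  simp only [segE02, map_add, ψW_X, ptWv1, ptWv4, Vmk, MAWe02, MBWe02, MCWe02, MDWe02]
  ext <;> norm_num [e0, e2, e4, es, toW]
lemma hvW03 : ψW (segMat45 0 3) = Vmk MAW MBW MCW MDW 0 3 := by
  simp only [segE03, map_add, map_add, ψW_X, ptWv2, ptWv5, ptWv8, Vmk, MAWe03, MBWe03, MCWe03, MDWe03]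
  ext <;> norm_num [e0, e2, e4, es, toW]
lemma hvW04 : ψW (segMat45 0 4) = Vmk MAW MBW MCW MDW 0 4 := by
  simp only [segE04, map_add, map_add, ψW_X, ptWv3, ptWv6, ptWv9, Vmk, MAWe04, MBWe04, MCWe04, MDWe04]
  ext <;> norm_num [e0, e2, e4, es, toW]
lemma hvW10 : ψW (segMat45 1 0) = Vmk MAW MBW MCW MDW 1 0 := by
  simp only [segE10, ψW_X, ptWv0, Vmk, MAWe10, MBWe10, MCWe10, MDWe10]
  ext <;> norm_num [e0, e2, e4, es, toW]
lemma hvW11 : ψW (segMat45 1 1) = Vmk MAW MBW MCW MDW 1 1 := by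
  simp only [segE11, ψW_X, ptWv1, Vmk, MAWe11, MBWe11, MCWe11, MDWe11]
  ext <;> norm_num [e0, e2, e4, es, toW]
lemma hvW12 : ψW (segMat45 1 2) = Vmk MAW MBW MCW MDW 1 2 := by
  simp only [segE12, ψW_X, ptWv2, Vmk, MAWe12, MBWe12, MCWe12, MDWe12]
  ext <;> norm_num [e0, e2, e4, es, toW]
lemma hvW13 : ψW (segMat45 1 3) = Vmk MAW MBW MCW MDW 1 3 := by
  simp only [segE13, ψW_X, ptWv3, Vmk, MAWe13, MBWe13, MCWe13, MDWe13]
  ext <;> norm_num [e0, e2, e4, es, toW]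
lemma hvW14 : ψW (segMat45 1 4) = Vmk MAW MBW MCW MDW 1 4 := by
  simp only [segE14, map_add, ψW_X, ptWv7, ptWv10, Vmk, MAWe14, MBWe14, MCWe14, MDWe14]
  ext <;> norm_num [e0, e2, e4, es, toW]
lemma hvW20 : ψW (segMat45 2 0) = Vmk MAW MBW MCW MDW 2 0 := by
  simp only [segE20, ψW_X, ptWv4, Vmk, MAWe20, MBWe20, MCWe20, MDWe20]
  ext <;> norm_num [e0, e2, e4, es, toW]
lemma hvW21 : ψW (segMat45 2 1) = Vmk MAW MBW MCW MDW 2 1 := by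
  simp only [segE21, ψW_X, ptWv5, Vmk, MAWe21, MBWe21, MCWe21, MDWe21]
  ext <;> norm_num [e0, e2, e4, es, toW]
lemma hvW22 : ψW (segMat45 2 2) = Vmk MAW MBW MCW MDW 2 2 := by
  simp only [segE22, ψW_X, ptWv6, Vmk, MAWe22, MBWe22, MCWe22, MDWe22]
  ext <;> norm_num [e0, e2, e4, es, toW]
lemma hvW23 : ψW (segMat45 2 3) = Vmk MAW MBW MCW MDW 2 3 := by
  simp only [segE23, ψW_X, ptWv7, Vmk, MAWe23, MBWe23, MCWe23, MDWe23]
  ext <;> norm_num [e0, e2, e4, es, toW]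
lemma hvW24 : ψW (segMat45 2 4) = Vmk MAW MBW MCW MDW 2 4 := by
  simp only [segE24, ψW_X, ptWv11, Vmk, MAWe24, MBWe24, MCWe24, MDWe24]
  ext <;> norm_num [e0, e2, e4, es, toW]
lemma hvW30 : ψW (segMat45 3 0) = Vmk MAW MBW MCW MDW 3 0 := by
  simp only [segE30, ψW_X, ptWv8, Vmk, MAWe30, MBWe30, MCWe30, MDWe30]
  ext <;> norm_num [e0, e2, e4, es, toW]
lemma hvW31 : ψW (segMat45 3 1) = Vmk MAW MBW MCW MDW 3 1 := by
  simp only [segE31, ψW_X, ptWv9, Vmk, MAWe31, MBWe31, MCWe31, MDWe31]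
  ext <;> norm_num [e0, e2, e4, es, toW]
lemma hvW32 : ψW (segMat45 3 2) = Vmk MAW MBW MCW MDW 3 2 := by
  simp only [segE32, ψW_X, ptWv10, Vmk, MAWe32, MBWe32, MCWe32, MDWe32]
  ext <;> norm_num [e0, e2, e4, es, toW]
lemma hvW33 : ψW (segMat45 3 3) = Vmk MAW MBW MCW MDW 3 3 := by
  simp only [segE33, ψW_X, ptWv11, Vmk, MAWe33, MBWe33, MCWe33, MDWe33]
  ext <;> norm_num [e0, e2, e4, es, toW]
lemma hvW34 : ψW (segMat45 3 4) = Vmk MAW MBW MCW MDW 3 4 := by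
  simp only [segE34, map_zero, Vmk, MAWe34, MBWe34, MCWe34, MDWe34]
  ext <;> norm_num [e0, e2, e4, es, toW]
lemma hVW : ∀ i j, ψW (segMat45 i j) = Vmk MAW MBW MCW MDW i j := by
  intro i j
  fin_cases i <;> fin_cases j <;>
    first | exact hvW00 | exact hvW01 | exact hvW02 | exact hvW03 | exact hvW04 | exact hvW10 | exact hvW11 | exact hvW12 | exact hvW13 | exact hvW14 | exact hvW20 | exact hvW21 | exact hvW22 | exact hvW23 | exact hvW24 | exact hvW30 | exact hvW31 | exact hvW32 | exact hvW33 | exact hvW34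
lemma seg_le_kerψW : segIdeal45 ≤ RingHom.ker ψW :=
  seg_le_kerW ψW MAW MBW MCW MDW hZW hVW

def ΦW : SegU45 →+* W6 :=
  Ideal.Quotient.lift segIdeal45 ψW (fun _ ha => seg_le_kerψW ha)

lemma ΦW_va (k : Fin 12) : ΦW (va k) = ptW k := by
  simp [ΦW, va, Ideal.Quotient.lift_mk, ψW]

/-! ### witness A -/
def ptA (k : Fin 12) : W6 := if k.val = 1 ∨ k.val = 4 then e0 else 0
lemma ptAv0 : ptA 0 = 0 := rfl
lemma ptAv1 : ptA 1 = e0 := rfl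
lemma ptAv2 : ptA 2 = 0 := rfl
lemma ptAv3 : ptA 3 = 0 := rfl
lemma ptAv4 : ptA 4 = e0 := rfl
lemma ptAv5 : ptA 5 = 0 := rfl
lemma ptAv6 : ptA 6 = 0 := rfl
lemma ptAv7 : ptA 7 = 0 := rfl
lemma ptAv8 : ptA 8 = 0 := rfl
lemma ptAv9 : ptA 9 = 0 := rfl
lemma ptAv10 : ptA 10 = 0 := rfl
lemma ptAv11 : ptA 11 = 0 := rfl
def MAA : Matrix (Fin 4) (Fin 5) ℤ := fun i j => if i.val = 0 ∧ j.val = 2 then 2 else (if i.val = 1 ∧ j.val = 1 then 1 else (if i.val = 2 ∧ j.val = 0 then 1 else (0)))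
lemma MAAe00 : MAA 0 0 = 0 := rfl
lemma MAAe01 : MAA 0 1 = 0 := rfl
lemma MAAe02 : MAA 0 2 = 2 := rfl
lemma MAAe03 : MAA 0 3 = 0 := rfl
lemma MAAe04 : MAA 0 4 = 0 := rfl
lemma MAAe10 : MAA 1 0 = 0 := rfl
lemma MAAe11 : MAA 1 1 = 1 := rfl
lemma MAAe12 : MAA 1 2 = 0 := rfl
lemma MAAe13 : MAA 1 3 = 0 := rfl
lemma MAAe14 : MAA 1 4 = 0 := rfl
lemma MAAe20 : MAA 2 0 = 1 := rfl
lemma MAAe21 : MAA 2 1 = 0 := rfl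
lemma MAAe22 : MAA 2 2 = 0 := rfl
lemma MAAe23 : MAA 2 3 = 0 := rfl
lemma MAAe24 : MAA 2 4 = 0 := rfl
lemma MAAe30 : MAA 3 0 = 0 := rfl
lemma MAAe31 : MAA 3 1 = 0 := rfl
lemma MAAe32 : MAA 3 2 = 0 := rfl
lemma MAAe33 : MAA 3 3 = 0 := rfl
lemma MAAe34 : MAA 3 4 = 0 := rfl
def ψA : MvPolynomial (Fin 12) ℚ →+* W6 := (MvPolynomial.eval₂Hom toW ptA : _)
lemma ψA_X (k : Fin 12) : ψA (X k) = ptA k := by simp [ψA]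
lemma hZA : ∀ (i i' : Fin 4) (j j' : Fin 5),
    MAA i j * Z45 i' j' + Z45 i j * MAA i' j' + Z45 i j * Z45 i' j' + Z45 i j * Z45 i' j'
    = MAA i j' * Z45 i' j + Z45 i j' * MAA i' j + Z45 i j' * Z45 i' j + Z45 i j' * Z45 i' j := by
  decide
lemma hvA00 : ψA (segMat45 0 0) = Vmk MAA Z45 Z45 Z45 0 0 := by
  simp only [segE00, map_zero, Vmk, MAAe00, Z45e, Z45e, Z45e]
  ext <;> norm_num [e0, e2, e4, es, toW]
lemma hvA01 : ψA (segMat45 0 1) = Vmk MAA Z45 Z45 Z45 0 1 := by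
  simp only [segE01, ψA_X, ptAv0, Vmk, MAAe01, Z45e, Z45e, Z45e]
  ext <;> norm_num [e0, e2, e4, es, toW]
lemma hvA02 : ψA (segMat45 0 2) = Vmk MAA Z45 Z45 Z45 0 2 := by
  simp only [segE02, map_add, ψA_X, ptAv1, ptAv4, Vmk, MAAe02, Z45e, Z45e, Z45e]
  ext <;> norm_num [e0, e2, e4, es, toW]
lemma hvA03 : ψA (segMat45 0 3) = Vmk MAA Z45 Z45 Z45 0 3 := by
  simp only [segE03, map_add, map_add, ψA_X, ptAv2, ptAv5, ptAv8, Vmk, MAAe03, Z45e, Z45e, Z45e]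
  ext <;> norm_num [e0, e2, e4, es, toW]
lemma hvA04 : ψA (segMat45 0 4) = Vmk MAA Z45 Z45 Z45 0 4 := by
  simp only [segE04, map_add, map_add, ψA_X, ptAv3, ptAv6, ptAv9, Vmk, MAAe04, Z45e, Z45e, Z45e]
  ext <;> norm_num [e0, e2, e4, es, toW]
lemma hvA10 : ψA (segMat45 1 0) = Vmk MAA Z45 Z45 Z45 1 0 := by
  simp only [segE10, ψA_X, ptAv0, Vmk, MAAe10, Z45e, Z45e, Z45e]
  ext <;> norm_num [e0, e2, e4, es, toW]
lemma hvA11 : ψA (segMat45 1 1) = Vmk MAA Z45 Z45 Z45 1 1 := by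
  simp only [segE11, ψA_X, ptAv1, Vmk, MAAe11, Z45e, Z45e, Z45e]
  ext <;> norm_num [e0, e2, e4, es, toW]
lemma hvA12 : ψA (segMat45 1 2) = Vmk MAA Z45 Z45 Z45 1 2 := by
  simp only [segE12, ψA_X, ptAv2, Vmk, MAAe12, Z45e, Z45e, Z45e]
  ext <;> norm_num [e0, e2, e4, es, toW]
lemma hvA13 : ψA (segMat45 1 3) = Vmk MAA Z45 Z45 Z45 1 3 := by
  simp only [segE13, ψA_X, ptAv3, Vmk, MAAe13, Z45e, Z45e, Z45e]
  ext <;> norm_num [e0, e2, e4, es, toW]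
lemma hvA14 : ψA (segMat45 1 4) = Vmk MAA Z45 Z45 Z45 1 4 := by
  simp only [segE14, map_add, ψA_X, ptAv7, ptAv10, Vmk, MAAe14, Z45e, Z45e, Z45e]
  ext <;> norm_num [e0, e2, e4, es, toW]
lemma hvA20 : ψA (segMat45 2 0) = Vmk MAA Z45 Z45 Z45 2 0 := by
  simp only [segE20, ψA_X, ptAv4, Vmk, MAAe20, Z45e, Z45e, Z45e]
  ext <;> norm_num [e0, e2, e4, es, toW]
lemma hvA21 : ψA (segMat45 2 1) = Vmk MAA Z45 Z45 Z45 2 1 := by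
  simp only [segE21, ψA_X, ptAv5, Vmk, MAAe21, Z45e, Z45e, Z45e]
  ext <;> norm_num [e0, e2, e4, es, toW]
lemma hvA22 : ψA (segMat45 2 2) = Vmk MAA Z45 Z45 Z45 2 2 := by
  simp only [segE22, ψA_X, ptAv6, Vmk, MAAe22, Z45e, Z45e, Z45e]
  ext <;> norm_num [e0, e2, e4, es, toW]
lemma hvA23 : ψA (segMat45 2 3) = Vmk MAA Z45 Z45 Z45 2 3 := by
  simp only [segE23, ψA_X, ptAv7, Vmk, MAAe23, Z45e, Z45e, Z45e]
  ext <;> norm_num [e0, e2, e4, es, toW]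
lemma hvA24 : ψA (segMat45 2 4) = Vmk MAA Z45 Z45 Z45 2 4 := by
  simp only [segE24, ψA_X, ptAv11, Vmk, MAAe24, Z45e, Z45e, Z45e]
  ext <;> norm_num [e0, e2, e4, es, toW]
lemma hvA30 : ψA (segMat45 3 0) = Vmk MAA Z45 Z45 Z45 3 0 := by
  simp only [segE30, ψA_X, ptAv8, Vmk, MAAe30, Z45e, Z45e, Z45e]
  ext <;> norm_num [e0, e2, e4, es, toW]
lemma hvA31 : ψA (segMat45 3 1) = Vmk MAA Z45 Z45 Z45 3 1 := by
  simp only [segE31, ψA_X, ptAv9, Vmk, MAAe31, Z45e, Z45e, Z45e]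
  ext <;> norm_num [e0, e2, e4, es, toW]
lemma hvA32 : ψA (segMat45 3 2) = Vmk MAA Z45 Z45 Z45 3 2 := by
  simp only [segE32, ψA_X, ptAv10, Vmk, MAAe32, Z45e, Z45e, Z45e]
  ext <;> norm_num [e0, e2, e4, es, toW]
lemma hvA33 : ψA (segMat45 3 3) = Vmk MAA Z45 Z45 Z45 3 3 := by
  simp only [segE33, ψA_X, ptAv11, Vmk, MAAe33, Z45e, Z45e, Z45e]
  ext <;> norm_num [e0, e2, e4, es, toW]
lemma hvA34 : ψA (segMat45 3 4) = Vmk MAA Z45 Z45 Z45 3 4 := by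
  simp only [segE34, map_zero, Vmk, MAAe34, Z45e, Z45e, Z45e]
  ext <;> norm_num [e0, e2, e4, es, toW]
lemma hVA : ∀ i j, ψA (segMat45 i j) = Vmk MAA Z45 Z45 Z45 i j := by
  intro i j
  fin_cases i <;> fin_cases j <;>
    first | exact hvA00 | exact hvA01 | exact hvA02 | exact hvA03 | exact hvA04 | exact hvA10 | exact hvA11 | exact hvA12 | exact hvA13 | exact hvA14 | exact hvA20 | exact hvA21 | exact hvA22 | exact hvA23 | exact hvA24 | exact hvA30 | exact hvA31 | exact hvA32 | exact hvA33 | exact hvA34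
lemma seg_le_kerψA : segIdeal45 ≤ RingHom.ker ψA :=
  seg_le_kerW ψA MAA Z45 Z45 Z45 hZA hVA

def ΦA : SegU45 →+* W6 :=
  Ideal.Quotient.lift segIdeal45 ψA (fun _ ha => seg_le_kerψA ha)

lemma ΦA_va (k : Fin 12) : ΦA (va k) = ptA k := by
  simp [ΦA, va, Ideal.Quotient.lift_mk, ψA]

/-! ### witness B -/
def ptB (k : Fin 12) : W6 := if k.val = 1 then -e0 else if k.val = 4 then e0 else 0
lemma ptBv0 : ptB 0 = 0 := rfl
lemma ptBv1 : ptB 1 = (-e0) := rfl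
lemma ptBv2 : ptB 2 = 0 := rfl
lemma ptBv3 : ptB 3 = 0 := rfl
lemma ptBv4 : ptB 4 = e0 := rfl
lemma ptBv5 : ptB 5 = 0 := rfl
lemma ptBv6 : ptB 6 = 0 := rfl
lemma ptBv7 : ptB 7 = 0 := rfl
lemma ptBv8 : ptB 8 = 0 := rfl
lemma ptBv9 : ptB 9 = 0 := rfl
lemma ptBv10 : ptB 10 = 0 := rfl
lemma ptBv11 : ptB 11 = 0 := rfl
def MAB : Matrix (Fin 4) (Fin 5) ℤ := fun i j => if i.val = 1 ∧ j.val = 1 then -1 else (if i.val = 2 ∧ j.val = 0 then 1 else (0))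
lemma MABe00 : MAB 0 0 = 0 := rfl
lemma MABe01 : MAB 0 1 = 0 := rfl
lemma MABe02 : MAB 0 2 = 0 := rfl
lemma MABe03 : MAB 0 3 = 0 := rfl
lemma MABe04 : MAB 0 4 = 0 := rfl
lemma MABe10 : MAB 1 0 = 0 := rfl
lemma MABe11 : MAB 1 1 = -1 := rfl
lemma MABe12 : MAB 1 2 = 0 := rfl
lemma MABe13 : MAB 1 3 = 0 := rfl
lemma MABe14 : MAB 1 4 = 0 := rfl
lemma MABe20 : MAB 2 0 = 1 := rfl
lemma MABe21 : MAB 2 1 = 0 := rfl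
lemma MABe22 : MAB 2 2 = 0 := rfl
lemma MABe23 : MAB 2 3 = 0 := rfl
lemma MABe24 : MAB 2 4 = 0 := rfl
lemma MABe30 : MAB 3 0 = 0 := rfl
lemma MABe31 : MAB 3 1 = 0 := rfl
lemma MABe32 : MAB 3 2 = 0 := rfl
lemma MABe33 : MAB 3 3 = 0 := rfl
lemma MABe34 : MAB 3 4 = 0 := rfl
def ψB : MvPolynomial (Fin 12) ℚ →+* W6 := (MvPolynomial.eval₂Hom toW ptB : _)
lemma ψB_X (k : Fin 12) : ψB (X k) = ptB k := by simp [ψB]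
lemma hZB : ∀ (i i' : Fin 4) (j j' : Fin 5),
    MAB i j * Z45 i' j' + Z45 i j * MAB i' j' + Z45 i j * Z45 i' j' + Z45 i j * Z45 i' j'
    = MAB i j' * Z45 i' j + Z45 i j' * MAB i' j + Z45 i j' * Z45 i' j + Z45 i j' * Z45 i' j := by
  decide
lemma hvB00 : ψB (segMat45 0 0) = Vmk MAB Z45 Z45 Z45 0 0 := by
  simp only [segE00, map_zero, Vmk, MABe00, Z45e, Z45e, Z45e]
  ext <;> norm_num [e0, e2, e4, es, toW]
lemma hvB01 : ψB (segMat45 0 1) = Vmk MAB Z45 Z45 Z45 0 1 := by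
  simp only [segE01, ψB_X, ptBv0, Vmk, MABe01, Z45e, Z45e, Z45e]
  ext <;> norm_num [e0, e2, e4, es, toW]
lemma hvB02 : ψB (segMat45 0 2) = Vmk MAB Z45 Z45 Z45 0 2 := by
  simp only [segE02, map_add, ψB_X, ptBv1, ptBv4, Vmk, MABe02, Z45e, Z45e, Z45e]
  ext <;> norm_num [e0, e2, e4, es, toW]
lemma hvB03 : ψB (segMat45 0 3) = Vmk MAB Z45 Z45 Z45 0 3 := by
  simp only [segE03, map_add, map_add, ψB_X, ptBv2, ptBv5, ptBv8, Vmk, MABe03, Z45e, Z45e, Z45e]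
  ext <;> norm_num [e0, e2, e4, es, toW]
lemma hvB04 : ψB (segMat45 0 4) = Vmk MAB Z45 Z45 Z45 0 4 := by
  simp only [segE04, map_add, map_add, ψB_X, ptBv3, ptBv6, ptBv9, Vmk, MABe04, Z45e, Z45e, Z45e]
  ext <;> norm_num [e0, e2, e4, es, toW]
lemma hvB10 : ψB (segMat45 1 0) = Vmk MAB Z45 Z45 Z45 1 0 := by
  simp only [segE10, ψB_X, ptBv0, Vmk, MABe10, Z45e, Z45e, Z45e]
  ext <;> norm_num [e0, e2, e4, es, toW]
lemma hvB11 : ψB (segMat45 1 1) = Vmk MAB Z45 Z45 Z45 1 1 := by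
  simp only [segE11, ψB_X, ptBv1, Vmk, MABe11, Z45e, Z45e, Z45e]
  ext <;> norm_num [e0, e2, e4, es, toW]
lemma hvB12 : ψB (segMat45 1 2) = Vmk MAB Z45 Z45 Z45 1 2 := by
  simp only [segE12, ψB_X, ptBv2, Vmk, MABe12, Z45e, Z45e, Z45e]
  ext <;> norm_num [e0, e2, e4, es, toW]
lemma hvB13 : ψB (segMat45 1 3) = Vmk MAB Z45 Z45 Z45 1 3 := by
  simp only [segE13, ψB_X, ptBv3, Vmk, MABe13, Z45e, Z45e, Z45e]
  ext <;> norm_num [e0, e2, e4, es, toW]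
lemma hvB14 : ψB (segMat45 1 4) = Vmk MAB Z45 Z45 Z45 1 4 := by
  simp only [segE14, map_add, ψB_X, ptBv7, ptBv10, Vmk, MABe14, Z45e, Z45e, Z45e]
  ext <;> norm_num [e0, e2, e4, es, toW]
lemma hvB20 : ψB (segMat45 2 0) = Vmk MAB Z45 Z45 Z45 2 0 := by
  simp only [segE20, ψB_X, ptBv4, Vmk, MABe20, Z45e, Z45e, Z45e]
  ext <;> norm_num [e0, e2, e4, es, toW]
lemma hvB21 : ψB (segMat45 2 1) = Vmk MAB Z45 Z45 Z45 2 1 := by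
  simp only [segE21, ψB_X, ptBv5, Vmk, MABe21, Z45e, Z45e, Z45e]
  ext <;> norm_num [e0, e2, e4, es, toW]
lemma hvB22 : ψB (segMat45 2 2) = Vmk MAB Z45 Z45 Z45 2 2 := by
  simp only [segE22, ψB_X, ptBv6, Vmk, MABe22, Z45e, Z45e, Z45e]
  ext <;> norm_num [e0, e2, e4, es, toW]
lemma hvB23 : ψB (segMat45 2 3) = Vmk MAB Z45 Z45 Z45 2 3 := by
  simp only [segE23, ψB_X, ptBv7, Vmk, MABe23, Z45e, Z45e, Z45e]
  ext <;> norm_num [e0, e2, e4, es, toW]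
lemma hvB24 : ψB (segMat45 2 4) = Vmk MAB Z45 Z45 Z45 2 4 := by
  simp only [segE24, ψB_X, ptBv11, Vmk, MABe24, Z45e, Z45e, Z45e]
  ext <;> norm_num [e0, e2, e4, es, toW]
lemma hvB30 : ψB (segMat45 3 0) = Vmk MAB Z45 Z45 Z45 3 0 := by
  simp only [segE30, ψB_X, ptBv8, Vmk, MABe30, Z45e, Z45e, Z45e]
  ext <;> norm_num [e0, e2, e4, es, toW]
lemma hvB31 : ψB (segMat45 3 1) = Vmk MAB Z45 Z45 Z45 3 1 := by
  simp only [segE31, ψB_X, ptBv9, Vmk, MABe31, Z45e, Z45e, Z45e]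
  ext <;> norm_num [e0, e2, e4, es, toW]
lemma hvB32 : ψB (segMat45 3 2) = Vmk MAB Z45 Z45 Z45 3 2 := by
  simp only [segE32, ψB_X, ptBv10, Vmk, MABe32, Z45e, Z45e, Z45e]
  ext <;> norm_num [e0, e2, e4, es, toW]
lemma hvB33 : ψB (segMat45 3 3) = Vmk MAB Z45 Z45 Z45 3 3 := by
  simp only [segE33, ψB_X, ptBv11, Vmk, MABe33, Z45e, Z45e, Z45e]
  ext <;> norm_num [e0, e2, e4, es, toW]
lemma hvB34 : ψB (segMat45 3 4) = Vmk MAB Z45 Z45 Z45 3 4 := by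
  simp only [segE34, map_zero, Vmk, MABe34, Z45e, Z45e, Z45e]
  ext <;> norm_num [e0, e2, e4, es, toW]
lemma hVB : ∀ i j, ψB (segMat45 i j) = Vmk MAB Z45 Z45 Z45 i j := by
  intro i j
  fin_cases i <;> fin_cases j <;>
    first | exact hvB00 | exact hvB01 | exact hvB02 | exact hvB03 | exact hvB04 | exact hvB10 | exact hvB11 | exact hvB12 | exact hvB13 | exact hvB14 | exact hvB20 | exact hvB21 | exact hvB22 | exact hvB23 | exact hvB24 | exact hvB30 | exact hvB31 | exact hvB32 | exact hvB33 | exact hvB34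
lemma seg_le_kerψB : segIdeal45 ≤ RingHom.ker ψB :=
  seg_le_kerW ψB MAB Z45 Z45 Z45 hZB hVB

def ΦB : SegU45 →+* W6 :=
  Ideal.Quotient.lift segIdeal45 ψB (fun _ ha => seg_le_kerψB ha)

lemma ΦB_va (k : Fin 12) : ΦB (va k) = ptB k := by
  simp [ΦB, va, Ideal.Quotient.lift_mk, ψB]

/-! ### witness D -/
def ptD (k : Fin 12) : W6 := if k.val = 0 then e0 else 0
lemma ptDv0 : ptD 0 = e0 := rfl
lemma ptDv1 : ptD 1 = 0 := rfl
lemma ptDv2 : ptD 2 = 0 := rfl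
lemma ptDv3 : ptD 3 = 0 := rfl
lemma ptDv4 : ptD 4 = 0 := rfl
lemma ptDv5 : ptD 5 = 0 := rfl
lemma ptDv6 : ptD 6 = 0 := rfl
lemma ptDv7 : ptD 7 = 0 := rfl
lemma ptDv8 : ptD 8 = 0 := rfl
lemma ptDv9 : ptD 9 = 0 := rfl
lemma ptDv10 : ptD 10 = 0 := rfl
lemma ptDv11 : ptD 11 = 0 := rfl
def MAD : Matrix (Fin 4) (Fin 5) ℤ := fun i j => if i.val = 0 ∧ j.val = 1 then 1 else (if i.val = 1 ∧ j.val = 0 then 1 else (0))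
lemma MADe00 : MAD 0 0 = 0 := rfl
lemma MADe01 : MAD 0 1 = 1 := rfl
lemma MADe02 : MAD 0 2 = 0 := rfl
lemma MADe03 : MAD 0 3 = 0 := rfl
lemma MADe04 : MAD 0 4 = 0 := rfl
lemma MADe10 : MAD 1 0 = 1 := rfl
lemma MADe11 : MAD 1 1 = 0 := rfl
lemma MADe12 : MAD 1 2 = 0 := rfl
lemma MADe13 : MAD 1 3 = 0 := rfl
lemma MADe14 : MAD 1 4 = 0 := rfl
lemma MADe20 : MAD 2 0 = 0 := rfl
lemma MADe21 : MAD 2 1 = 0 := rfl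
lemma MADe22 : MAD 2 2 = 0 := rfl
lemma MADe23 : MAD 2 3 = 0 := rfl
lemma MADe24 : MAD 2 4 = 0 := rfl
lemma MADe30 : MAD 3 0 = 0 := rfl
lemma MADe31 : MAD 3 1 = 0 := rfl
lemma MADe32 : MAD 3 2 = 0 := rfl
lemma MADe33 : MAD 3 3 = 0 := rfl
lemma MADe34 : MAD 3 4 = 0 := rfl
def ψD : MvPolynomial (Fin 12) ℚ →+* W6 := (MvPolynomial.eval₂Hom toW ptD : _)
lemma ψD_X (k : Fin 12) : ψD (X k) = ptD k := by simp [ψD]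
lemma hZD : ∀ (i i' : Fin 4) (j j' : Fin 5),
    MAD i j * Z45 i' j' + Z45 i j * MAD i' j' + Z45 i j * Z45 i' j' + Z45 i j * Z45 i' j'
    = MAD i j' * Z45 i' j + Z45 i j' * MAD i' j + Z45 i j' * Z45 i' j + Z45 i j' * Z45 i' j := by
  decide
lemma hvD00 : ψD (segMat45 0 0) = Vmk MAD Z45 Z45 Z45 0 0 := by
  simp only [segE00, map_zero, Vmk, MADe00, Z45e, Z45e, Z45e]
  ext <;> norm_num [e0, e2, e4, es, toW]
lemma hvD01 : ψD (segMat45 0 1) = Vmk MAD Z45 Z45 Z45 0 1 := by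
  simp only [segE01, ψD_X, ptDv0, Vmk, MADe01, Z45e, Z45e, Z45e]
  ext <;> norm_num [e0, e2, e4, es, toW]
lemma hvD02 : ψD (segMat45 0 2) = Vmk MAD Z45 Z45 Z45 0 2 := by
  simp only [segE02, map_add, ψD_X, ptDv1, ptDv4, Vmk, MADe02, Z45e, Z45e, Z45e]
  ext <;> norm_num [e0, e2, e4, es, toW]
lemma hvD03 : ψD (segMat45 0 3) = Vmk MAD Z45 Z45 Z45 0 3 := by
  simp only [segE03, map_add, map_add, ψD_X, ptDv2, ptDv5, ptDv8, Vmk, MADe03, Z45e, Z45e, Z45e]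
  ext <;> norm_num [e0, e2, e4, es, toW]
lemma hvD04 : ψD (segMat45 0 4) = Vmk MAD Z45 Z45 Z45 0 4 := by
  simp only [segE04, map_add, map_add, ψD_X, ptDv3, ptDv6, ptDv9, Vmk, MADe04, Z45e, Z45e, Z45e]
  ext <;> norm_num [e0, e2, e4, es, toW]
lemma hvD10 : ψD (segMat45 1 0) = Vmk MAD Z45 Z45 Z45 1 0 := by
  simp only [segE10, ψD_X, ptDv0, Vmk, MADe10, Z45e, Z45e, Z45e]
  ext <;> norm_num [e0, e2, e4, es, toW]
lemma hvD11 : ψD (segMat45 1 1) = Vmk MAD Z45 Z45 Z45 1 1 := by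
  simp only [segE11, ψD_X, ptDv1, Vmk, MADe11, Z45e, Z45e, Z45e]
  ext <;> norm_num [e0, e2, e4, es, toW]
lemma hvD12 : ψD (segMat45 1 2) = Vmk MAD Z45 Z45 Z45 1 2 := by
  simp only [segE12, ψD_X, ptDv2, Vmk, MADe12, Z45e, Z45e, Z45e]
  ext <;> norm_num [e0, e2, e4, es, toW]
lemma hvD13 : ψD (segMat45 1 3) = Vmk MAD Z45 Z45 Z45 1 3 := by
  simp only [segE13, ψD_X, ptDv3, Vmk, MADe13, Z45e, Z45e, Z45e]
  ext <;> norm_num [e0, e2, e4, es, toW]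
lemma hvD14 : ψD (segMat45 1 4) = Vmk MAD Z45 Z45 Z45 1 4 := by
  simp only [segE14, map_add, ψD_X, ptDv7, ptDv10, Vmk, MADe14, Z45e, Z45e, Z45e]
  ext <;> norm_num [e0, e2, e4, es, toW]
lemma hvD20 : ψD (segMat45 2 0) = Vmk MAD Z45 Z45 Z45 2 0 := by
  simp only [segE20, ψD_X, ptDv4, Vmk, MADe20, Z45e, Z45e, Z45e]
  ext <;> norm_num [e0, e2, e4, es, toW]
lemma hvD21 : ψD (segMat45 2 1) = Vmk MAD Z45 Z45 Z45 2 1 := by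
  simp only [segE21, ψD_X, ptDv5, Vmk, MADe21, Z45e, Z45e, Z45e]
  ext <;> norm_num [e0, e2, e4, es, toW]
lemma hvD22 : ψD (segMat45 2 2) = Vmk MAD Z45 Z45 Z45 2 2 := by
  simp only [segE22, ψD_X, ptDv6, Vmk, MADe22, Z45e, Z45e, Z45e]
  ext <;> norm_num [e0, e2, e4, es, toW]
lemma hvD23 : ψD (segMat45 2 3) = Vmk MAD Z45 Z45 Z45 2 3 := by
  simp only [segE23, ψD_X, ptDv7, Vmk, MADe23, Z45e, Z45e, Z45e]
  ext <;> norm_num [e0, e2, e4, es, toW]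
lemma hvD24 : ψD (segMat45 2 4) = Vmk MAD Z45 Z45 Z45 2 4 := by
  simp only [segE24, ψD_X, ptDv11, Vmk, MADe24, Z45e, Z45e, Z45e]
  ext <;> norm_num [e0, e2, e4, es, toW]
lemma hvD30 : ψD (segMat45 3 0) = Vmk MAD Z45 Z45 Z45 3 0 := by
  simp only [segE30, ψD_X, ptDv8, Vmk, MADe30, Z45e, Z45e, Z45e]
  ext <;> norm_num [e0, e2, e4, es, toW]
lemma hvD31 : ψD (segMat45 3 1) = Vmk MAD Z45 Z45 Z45 3 1 := by
  simp only [segE31, ψD_X, ptDv9, Vmk, MADe31, Z45e, Z45e, Z45e]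
  ext <;> norm_num [e0, e2, e4, es, toW]
lemma hvD32 : ψD (segMat45 3 2) = Vmk MAD Z45 Z45 Z45 3 2 := by
  simp only [segE32, ψD_X, ptDv10, Vmk, MADe32, Z45e, Z45e, Z45e]
  ext <;> norm_num [e0, e2, e4, es, toW]
lemma hvD33 : ψD (segMat45 3 3) = Vmk MAD Z45 Z45 Z45 3 3 := by
  simp only [segE33, ψD_X, ptDv11, Vmk, MADe33, Z45e, Z45e, Z45e]
  ext <;> norm_num [e0, e2, e4, es, toW]
lemma hvD34 : ψD (segMat45 3 4) = Vmk MAD Z45 Z45 Z45 3 4 := by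
  simp only [segE34, map_zero, Vmk, MADe34, Z45e, Z45e, Z45e]
  ext <;> norm_num [e0, e2, e4, es, toW]
lemma hVD : ∀ i j, ψD (segMat45 i j) = Vmk MAD Z45 Z45 Z45 i j := by
  intro i j
  fin_cases i <;> fin_cases j <;>
    first | exact hvD00 | exact hvD01 | exact hvD02 | exact hvD03 | exact hvD04 | exact hvD10 | exact hvD11 | exact hvD12 | exact hvD13 | exact hvD14 | exact hvD20 | exact hvD21 | exact hvD22 | exact hvD23 | exact hvD24 | exact hvD30 | exact hvD31 | exact hvD32 | exact hvD33 | exact hvD34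
lemma seg_le_kerψD : segIdeal45 ≤ RingHom.ker ψD :=
  seg_le_kerW ψD MAD Z45 Z45 Z45 hZD hVD

def ΦD : SegU45 →+* W6 :=
  Ideal.Quotient.lift segIdeal45 ψD (fun _ ha => seg_le_kerψD ha)

lemma ΦD_va (k : Fin 12) : ΦD (va k) = ptD k := by
  simp [ΦD, va, Ideal.Quotient.lift_mk, ψD]

/-! ### Quadratic relations in `SegU45` coming from the minors -/
lemma relMinor (i i' : Fin 4) (j j' : Fin 5) (h1 : i < i') (h2 : j < j') :
    Ideal.Quotient.mk segIdeal45 (segMat45 i j) * Ideal.Quotient.mk segIdeal45 (segMat45 i' j')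
      = Ideal.Quotient.mk segIdeal45 (segMat45 i j') * Ideal.Quotient.mk segIdeal45 (segMat45 i' j) := by
  rw [← map_mul, ← map_mul]
  exact Ideal.Quotient.eq.mpr (Ideal.subset_span ⟨i, i', j, j', h1, h2, rfl⟩)
lemma rel0101 : 0 * va 1 = va 0 * va 0 := by
  have r := relMinor 0 1 0 1 (by decide) (by decide)
  simpa [va, segE00, segE11, segE01, segE10, map_add] using r
lemma rel0102 : 0 * va 2 = (va 1 + va 4) * va 0 := by
  have r := relMinor 0 1 0 2 (by decide) (by decide)
  simpa [va, segE00, segE12, segE02, segE10, map_add] using r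
lemma rel0103 : 0 * va 3 = (va 2 + va 5 + va 8) * va 0 := by
  have r := relMinor 0 1 0 3 (by decide) (by decide)
  simpa [va, segE00, segE13, segE03, segE10, map_add] using r
lemma rel0104 : 0 * (va 7 + va 10) = (va 3 + va 6 + va 9) * va 0 := by
  have r := relMinor 0 1 0 4 (by decide) (by decide)
  simpa [va, segE00, segE14, segE04, segE10, map_add] using r
lemma rel0112 : va 0 * va 2 = (va 1 + va 4) * va 1 := by
  have r := relMinor 0 1 1 2 (by decide) (by decide)
  simpa [va, segE01, segE12, segE02, segE11, map_add] using r
lemma rel0113 : va 0 * va 3 = (va 2 + va 5 + va 8) * va 1 := by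
  have r := relMinor 0 1 1 3 (by decide) (by decide)
  simpa [va, segE01, segE13, segE03, segE11, map_add] using r
lemma rel0114 : va 0 * (va 7 + va 10) = (va 3 + va 6 + va 9) * va 1 := by
  have r := relMinor 0 1 1 4 (by decide) (by decide)
  simpa [va, segE01, segE14, segE04, segE11, map_add] using r
lemma rel0123 : (va 1 + va 4) * va 3 = (va 2 + va 5 + va 8) * va 2 := by
  have r := relMinor 0 1 2 3 (by decide) (by decide)
  simpa [va, segE02, segE13, segE03, segE12, map_add] using r
lemma rel0201 : 0 * va 5 = va 0 * va 4 := by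
  have r := relMinor 0 2 0 1 (by decide) (by decide)
  simpa [va, segE00, segE21, segE01, segE20, map_add] using r
lemma rel0202 : 0 * va 6 = (va 1 + va 4) * va 4 := by
  have r := relMinor 0 2 0 2 (by decide) (by decide)
  simpa [va, segE00, segE22, segE02, segE20, map_add] using r
lemma rel0203 : 0 * va 7 = (va 2 + va 5 + va 8) * va 4 := by
  have r := relMinor 0 2 0 3 (by decide) (by decide)
  simpa [va, segE00, segE23, segE03, segE20, map_add] using r
lemma rel0212 : va 0 * va 6 = (va 1 + va 4) * va 5 := by
  have r := relMinor 0 2 1 2 (by decide) (by decide)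
  simpa [va, segE01, segE22, segE02, segE21, map_add] using r
lemma rel0213 : va 0 * va 7 = (va 2 + va 5 + va 8) * va 5 := by
  have r := relMinor 0 2 1 3 (by decide) (by decide)
  simpa [va, segE01, segE23, segE03, segE21, map_add] using r
lemma rel0301 : 0 * va 9 = va 0 * va 8 := by
  have r := relMinor 0 3 0 1 (by decide) (by decide)
  simpa [va, segE00, segE31, segE01, segE30, map_add] using r
lemma rel0302 : 0 * va 10 = (va 1 + va 4) * va 8 := by
  have r := relMinor 0 3 0 2 (by decide) (by decide)
  simpa [va, segE00, segE32, segE02, segE30, map_add] using r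
lemma rel0312 : va 0 * va 10 = (va 1 + va 4) * va 9 := by
  have r := relMinor 0 3 1 2 (by decide) (by decide)
  simpa [va, segE01, segE32, segE02, segE31, map_add] using r
lemma rel1201 : va 0 * va 5 = va 1 * va 4 := by
  have r := relMinor 1 2 0 1 (by decide) (by decide)
  simpa [va, segE10, segE21, segE11, segE20, map_add] using r
lemma rel1202 : va 0 * va 6 = va 2 * va 4 := by
  have r := relMinor 1 2 0 2 (by decide) (by decide)
  simpa [va, segE10, segE22, segE12, segE20, map_add] using r
lemma rel1203 : va 0 * va 7 = va 3 * va 4 := by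
  have r := relMinor 1 2 0 3 (by decide) (by decide)
  simpa [va, segE10, segE23, segE13, segE20, map_add] using r
lemma rel1212 : va 1 * va 6 = va 2 * va 5 := by
  have r := relMinor 1 2 1 2 (by decide) (by decide)
  simpa [va, segE11, segE22, segE12, segE21, map_add] using r
lemma rel1301 : va 0 * va 9 = va 1 * va 8 := by
  have r := relMinor 1 3 0 1 (by decide) (by decide)
  simpa [va, segE10, segE31, segE11, segE30, map_add] using r
lemma rel1302 : va 0 * va 10 = va 2 * va 8 := by
  have r := relMinor 1 3 0 2 (by decide) (by decide)
  simpa [va, segE10, segE32, segE12, segE30, map_add] using r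
lemma rel2301 : va 4 * va 9 = va 5 * va 8 := by
  have r := relMinor 2 3 0 1 (by decide) (by decide)
  simpa [va, segE20, segE31, segE21, segE30, map_add] using r
lemma va0sq : va 0 * va 0 = 0 := by linear_combination (-1 : SegU45) * rel0101


/-! ### generator membership -/
lemma gmem_KI7_11 : va 11 ∈ KI₇ := Ideal.subset_span (by simp)
lemma gmem_KI7_10 : va 10 ∈ KI₇ := Ideal.subset_span (by simp)
lemma gmem_KI7_9 : va 9 ∈ KI₇ := Ideal.subset_span (by simp)
lemma gmem_KI7_8 : va 8 ∈ KI₇ := Ideal.subset_span (by simp)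
lemma gmem_KI7_7 : va 7 ∈ KI₇ := Ideal.subset_span (by simp)
lemma gmem_KI7_6 : va 6 ∈ KI₇ := Ideal.subset_span (by simp)
lemma gmem_KI7_3 : va 3 ∈ KI₇ := Ideal.subset_span (by simp)
lemma gmem_KI8_11 : va 11 ∈ KI₈ := Ideal.subset_span (by simp)
lemma gmem_KI8_10 : va 10 ∈ KI₈ := Ideal.subset_span (by simp)
lemma gmem_KI8_9 : va 9 ∈ KI₈ := Ideal.subset_span (by simp)
lemma gmem_KI8_8 : va 8 ∈ KI₈ := Ideal.subset_span (by simp)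
lemma gmem_KI8_7 : va 7 ∈ KI₈ := Ideal.subset_span (by simp)
lemma gmem_KI8_6 : va 6 ∈ KI₈ := Ideal.subset_span (by simp)
lemma gmem_KI8_3 : va 3 ∈ KI₈ := Ideal.subset_span (by simp)
lemma gmemS_KI8 : va 5 + va 2 ∈ KI₈ := Ideal.subset_span (by simp)
lemma gmem_KI9_11 : va 11 ∈ KI₉ := Ideal.subset_span (by simp)
lemma gmem_KI9_10 : va 10 ∈ KI₉ := Ideal.subset_span (by simp)
lemma gmem_KI9_9 : va 9 ∈ KI₉ := Ideal.subset_span (by simp)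
lemma gmem_KI9_8 : va 8 ∈ KI₉ := Ideal.subset_span (by simp)
lemma gmem_KI9_7 : va 7 ∈ KI₉ := Ideal.subset_span (by simp)
lemma gmem_KI9_6 : va 6 ∈ KI₉ := Ideal.subset_span (by simp)
lemma gmem_KI9_5 : va 5 ∈ KI₉ := Ideal.subset_span (by simp)
lemma gmem_KI9_3 : va 3 ∈ KI₉ := Ideal.subset_span (by simp)
lemma gmem_KI9_2 : va 2 ∈ KI₉ := Ideal.subset_span (by simp)
lemma gmem_KI10_11 : va 11 ∈ KI₁₀ := Ideal.subset_span (by simp)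
lemma gmem_KI10_10 : va 10 ∈ KI₁₀ := Ideal.subset_span (by simp)
lemma gmem_KI10_9 : va 9 ∈ KI₁₀ := Ideal.subset_span (by simp)
lemma gmem_KI10_8 : va 8 ∈ KI₁₀ := Ideal.subset_span (by simp)
lemma gmem_KI10_7 : va 7 ∈ KI₁₀ := Ideal.subset_span (by simp)
lemma gmem_KI10_6 : va 6 ∈ KI₁₀ := Ideal.subset_span (by simp)
lemma gmem_KI10_5 : va 5 ∈ KI₁₀ := Ideal.subset_span (by simp)
lemma gmem_KI10_3 : va 3 ∈ KI₁₀ := Ideal.subset_span (by simp)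
lemma gmem_KI10_2 : va 2 ∈ KI₁₀ := Ideal.subset_span (by simp)
lemma gmemS_KI10 : va 4 + va 1 ∈ KI₁₀ := Ideal.subset_span (by simp)
lemma gmem_KI11_11 : va 11 ∈ KI₁₁ := Ideal.subset_span (by simp)
lemma gmem_KI11_10 : va 10 ∈ KI₁₁ := Ideal.subset_span (by simp)
lemma gmem_KI11_9 : va 9 ∈ KI₁₁ := Ideal.subset_span (by simp)
lemma gmem_KI11_8 : va 8 ∈ KI₁₁ := Ideal.subset_span (by simp)
lemma gmem_KI11_7 : va 7 ∈ KI₁₁ := Ideal.subset_span (by simp)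
lemma gmem_KI11_6 : va 6 ∈ KI₁₁ := Ideal.subset_span (by simp)
lemma gmem_KI11_5 : va 5 ∈ KI₁₁ := Ideal.subset_span (by simp)
lemma gmem_KI11_4 : va 4 ∈ KI₁₁ := Ideal.subset_span (by simp)
lemma gmem_KI11_3 : va 3 ∈ KI₁₁ := Ideal.subset_span (by simp)
lemma gmem_KI11_2 : va 2 ∈ KI₁₁ := Ideal.subset_span (by simp)
lemma gmem_KI11_1 : va 1 ∈ KI₁₁ := Ideal.subset_span (by simp)
lemma gmem_KI12_11 : va 11 ∈ KI₁₂ := Ideal.subset_span (by simp)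
lemma gmem_KI12_10 : va 10 ∈ KI₁₂ := Ideal.subset_span (by simp)
lemma gmem_KI12_9 : va 9 ∈ KI₁₂ := Ideal.subset_span (by simp)
lemma gmem_KI12_8 : va 8 ∈ KI₁₂ := Ideal.subset_span (by simp)
lemma gmem_KI12_7 : va 7 ∈ KI₁₂ := Ideal.subset_span (by simp)
lemma gmem_KI12_6 : va 6 ∈ KI₁₂ := Ideal.subset_span (by simp)
lemma gmem_KI12_5 : va 5 ∈ KI₁₂ := Ideal.subset_span (by simp)
lemma gmem_KI12_4 : va 4 ∈ KI₁₂ := Ideal.subset_span (by simp)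
lemma gmem_KI12_3 : va 3 ∈ KI₁₂ := Ideal.subset_span (by simp)
lemma gmem_KI12_2 : va 2 ∈ KI₁₂ := Ideal.subset_span (by simp)
lemma gmem_KI13_11 : va 11 ∈ KI₁₃ := Ideal.subset_span (by simp)
lemma gmem_KI13_10 : va 10 ∈ KI₁₃ := Ideal.subset_span (by simp)
lemma gmem_KI13_9 : va 9 ∈ KI₁₃ := Ideal.subset_span (by simp)
lemma gmem_KI13_8 : va 8 ∈ KI₁₃ := Ideal.subset_span (by simp)
lemma gmem_KI13_7 : va 7 ∈ KI₁₃ := Ideal.subset_span (by simp)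
lemma gmem_KI13_6 : va 6 ∈ KI₁₃ := Ideal.subset_span (by simp)
lemma gmem_KI13_5 : va 5 ∈ KI₁₃ := Ideal.subset_span (by simp)
lemma gmem_KI13_3 : va 3 ∈ KI₁₃ := Ideal.subset_span (by simp)
lemma gmem_KI14_11 : va 11 ∈ KI₁₄ := Ideal.subset_span (by simp)
lemma gmem_KI14_10 : va 10 ∈ KI₁₄ := Ideal.subset_span (by simp)
lemma gmem_KI14_9 : va 9 ∈ KI₁₄ := Ideal.subset_span (by simp)
lemma gmem_KI14_8 : va 8 ∈ KI₁₄ := Ideal.subset_span (by simp)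
lemma gmem_KI14_7 : va 7 ∈ KI₁₄ := Ideal.subset_span (by simp)
lemma gmem_KI14_6 : va 6 ∈ KI₁₄ := Ideal.subset_span (by simp)
lemma gmem_KI14_5 : va 5 ∈ KI₁₄ := Ideal.subset_span (by simp)
lemma gmem_KI14_4 : va 4 ∈ KI₁₄ := Ideal.subset_span (by simp)
lemma gmem_KI14_3 : va 3 ∈ KI₁₄ := Ideal.subset_span (by simp)

/-! ### product membership certificates -/
lemma pm_KI8_1_2 : va 1 * va 2 ∈ KI₈ := by
  have h : va 1 * va 2 = (-1 : SegU45) * (va 0 * va 9) + (-3 : SegU45) * (va 0 * va 6) := by linear_combination (-1 : SegU45) * rel0104 + (-1 : SegU45) * rel0113 + (-1 : SegU45) * rel0203 + (1 : SegU45) * rel0212 + (1 : SegU45) * rel0302 + (1 : SegU45) * rel1202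
  rw [h]
  exact (add_mem (Ideal.mul_mem_left _ _ (Ideal.mul_mem_left _ _ gmem_KI8_9)) (Ideal.mul_mem_left _ _ (Ideal.mul_mem_left _ _ gmem_KI8_6)))
lemma pm_KI8_1_5 : va 1 * va 5 ∈ KI₈ := by
  have h : va 1 * va 5 = (-1 : SegU45) * (va 0 * va 9) + (2 : SegU45) * (va 0 * va 6) := by linear_combination (1 : SegU45) * rel0203 + (-1 : SegU45) * rel0212 + (-1 : SegU45) * rel0302 + (-1 : SegU45) * rel1202 + (1 : SegU45) * rel1301
  rw [h]
  exact (add_mem (Ideal.mul_mem_left _ _ (Ideal.mul_mem_left _ _ gmem_KI8_9)) (Ideal.mul_mem_left _ _ (Ideal.mul_mem_left _ _ gmem_KI8_6)))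
lemma pm_KI8_2_2 : va 2 * va 2 ∈ KI₈ := by
  have h : va 2 * va 2 = (-1 : SegU45) * (va 1 * va 9) + (2 : SegU45) * (va 0 * va 7) + (-2 : SegU45) * (va 1 * va 6) := by linear_combination (-1 : SegU45) * rel0114 + (-1 : SegU45) * rel0123 + (-1 : SegU45) * rel1203 + (1 : SegU45) * rel1212 + (1 : SegU45) * rel1302
  rw [h]
  exact (add_mem (add_mem (Ideal.mul_mem_left _ _ (Ideal.mul_mem_left _ _ gmem_KI8_9)) (Ideal.mul_mem_left _ _ (Ideal.mul_mem_left _ _ gmem_KI8_7))) (Ideal.mul_mem_left _ _ (Ideal.mul_mem_left _ _ gmem_KI8_6)))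
lemma pm_KI8_2_5 : va 2 * va 5 ∈ KI₈ := by
  have h : va 2 * va 5 = (1 : SegU45) * (va 1 * va 6) := by linear_combination (-1 : SegU45) * rel1212
  rw [h]
  exact (Ideal.mul_mem_left _ _ (Ideal.mul_mem_left _ _ gmem_KI8_6))
lemma pm_KI8_4_2 : va 4 * va 2 ∈ KI₈ := by
  have h : va 4 * va 2 = (1 : SegU45) * (va 0 * va 6) := by linear_combination (-1 : SegU45) * rel1202
  rw [h]
  exact (Ideal.mul_mem_left _ _ (Ideal.mul_mem_left _ _ gmem_KI8_6))
lemma pm_KI8_4_5 : va 4 * va 5 ∈ KI₈ := by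
  have h : va 4 * va 5 = (1 : SegU45) * (va 0 * va 9) + (-1 : SegU45) * (va 0 * va 6) := by linear_combination (-1 : SegU45) * rel0203 + (1 : SegU45) * rel0302 + (1 : SegU45) * rel1202 + (-1 : SegU45) * rel1301
  rw [h]
  exact (add_mem (Ideal.mul_mem_left _ _ (Ideal.mul_mem_left _ _ gmem_KI8_9)) (Ideal.mul_mem_left _ _ (Ideal.mul_mem_left _ _ gmem_KI8_6)))
lemma pm_KI8_5_2 : va 5 * va 2 ∈ KI₈ := by
  have h : va 5 * va 2 = (1 : SegU45) * (va 1 * va 6) := by linear_combination (-1 : SegU45) * rel1212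
  rw [h]
  exact (Ideal.mul_mem_left _ _ (Ideal.mul_mem_left _ _ gmem_KI8_6))
lemma pm_KI8_5_5 : va 5 * va 5 ∈ KI₈ := by
  have h : va 5 * va 5 = (-1 : SegU45) * (va 0 * va 10) + (1 : SegU45) * (va 1 * va 9) + (1 : SegU45) * (va 0 * va 7) + (-1 : SegU45) * (va 1 * va 6) := by linear_combination (-1 : SegU45) * rel0213 + (1 : SegU45) * rel0312 + (1 : SegU45) * rel1212 + (1 : SegU45) * rel2301
  rw [h]
  exact (add_mem (add_mem (add_mem (Ideal.mul_mem_left _ _ (Ideal.mul_mem_left _ _ gmem_KI8_10)) (Ideal.mul_mem_left _ _ (Ideal.mul_mem_left _ _ gmem_KI8_9))) (Ideal.mul_mem_left _ _ (Ideal.mul_mem_left _ _ gmem_KI8_7))) (Ideal.mul_mem_left _ _ (Ideal.mul_mem_left _ _ gmem_KI8_6)))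
lemma pm_KI9_0_1 : va 0 * va 1 ∈ KI₉ := by
  have h : va 0 * va 1 = (0 : SegU45) := by linear_combination (-1 : SegU45) * rel0102 + (1 : SegU45) * rel0201
  rw [h]
  exact (zero_mem _)
lemma pm_KI10_0_1 : va 0 * va 1 ∈ KI₁₀ := by
  have h : va 0 * va 1 = (0 : SegU45) := by linear_combination (-1 : SegU45) * rel0102 + (1 : SegU45) * rel0201
  rw [h]
  exact (zero_mem _)
lemma pm_KI9_0_4 : va 0 * va 4 ∈ KI₉ := by
  have h : va 0 * va 4 = (0 : SegU45) := by linear_combination (-1 : SegU45) * rel0201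
  rw [h]
  exact (zero_mem _)
lemma pm_KI10_0_4 : va 0 * va 4 ∈ KI₁₀ := by
  have h : va 0 * va 4 = (0 : SegU45) := by linear_combination (-1 : SegU45) * rel0201
  rw [h]
  exact (zero_mem _)
lemma pm_KI9_1_1 : va 1 * va 1 ∈ KI₉ := by
  have h : va 1 * va 1 = (-2 : SegU45) * (va 0 * va 5) := by linear_combination (-1 : SegU45) * rel0103 + (-1 : SegU45) * rel0112 + (1 : SegU45) * rel0301 + (1 : SegU45) * rel1201
  rw [h]
  exact (Ideal.mul_mem_left _ _ (Ideal.mul_mem_left _ _ gmem_KI9_5))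
lemma pm_KI10_1_1 : va 1 * va 1 ∈ KI₁₀ := by
  have h : va 1 * va 1 = (-2 : SegU45) * (va 0 * va 5) := by linear_combination (-1 : SegU45) * rel0103 + (-1 : SegU45) * rel0112 + (1 : SegU45) * rel0301 + (1 : SegU45) * rel1201
  rw [h]
  exact (Ideal.mul_mem_left _ _ (Ideal.mul_mem_left _ _ gmem_KI10_5))
lemma pm_KI9_1_4 : va 1 * va 4 ∈ KI₉ := by
  have h : va 1 * va 4 = (1 : SegU45) * (va 0 * va 5) := by linear_combination (-1 : SegU45) * rel1201
  rw [h]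
  exact (Ideal.mul_mem_left _ _ (Ideal.mul_mem_left _ _ gmem_KI9_5))
lemma pm_KI10_1_4 : va 1 * va 4 ∈ KI₁₀ := by
  have h : va 1 * va 4 = (1 : SegU45) * (va 0 * va 5) := by linear_combination (-1 : SegU45) * rel1201
  rw [h]
  exact (Ideal.mul_mem_left _ _ (Ideal.mul_mem_left _ _ gmem_KI10_5))
lemma pm_KI9_4_1 : va 4 * va 1 ∈ KI₉ := by
  have h : va 4 * va 1 = (1 : SegU45) * (va 0 * va 5) := by linear_combination (-1 : SegU45) * rel1201
  rw [h]
  exact (Ideal.mul_mem_left _ _ (Ideal.mul_mem_left _ _ gmem_KI9_5))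
lemma pm_KI10_4_1 : va 4 * va 1 ∈ KI₁₀ := by
  have h : va 4 * va 1 = (1 : SegU45) * (va 0 * va 5) := by linear_combination (-1 : SegU45) * rel1201
  rw [h]
  exact (Ideal.mul_mem_left _ _ (Ideal.mul_mem_left _ _ gmem_KI10_5))
lemma pm_KI9_4_4 : va 4 * va 4 ∈ KI₉ := by
  have h : va 4 * va 4 = (-1 : SegU45) * (va 0 * va 5) := by linear_combination (-1 : SegU45) * rel0202 + (1 : SegU45) * rel1201
  rw [h]
  exact (Ideal.mul_mem_left _ _ (Ideal.mul_mem_left _ _ gmem_KI9_5))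
lemma pm_KI10_4_4 : va 4 * va 4 ∈ KI₁₀ := by
  have h : va 4 * va 4 = (-1 : SegU45) * (va 0 * va 5) := by linear_combination (-1 : SegU45) * rel0202 + (1 : SegU45) * rel1201
  rw [h]
  exact (Ideal.mul_mem_left _ _ (Ideal.mul_mem_left _ _ gmem_KI10_5))
lemma pm_KI7_1_5 : va 1 * va 5 ∈ KI₇ := by
  have h : va 1 * va 5 = (-1 : SegU45) * (va 0 * va 9) + (2 : SegU45) * (va 0 * va 6) := by linear_combination (1 : SegU45) * rel0203 + (-1 : SegU45) * rel0212 + (-1 : SegU45) * rel0302 + (-1 : SegU45) * rel1202 + (1 : SegU45) * rel1301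
  rw [h]
  exact (add_mem (Ideal.mul_mem_left _ _ (Ideal.mul_mem_left _ _ gmem_KI7_9)) (Ideal.mul_mem_left _ _ (Ideal.mul_mem_left _ _ gmem_KI7_6)))
lemma pm_KI7_2_5 : va 2 * va 5 ∈ KI₇ := by
  have h : va 2 * va 5 = (1 : SegU45) * (va 1 * va 6) := by linear_combination (-1 : SegU45) * rel1212
  rw [h]
  exact (Ideal.mul_mem_left _ _ (Ideal.mul_mem_left _ _ gmem_KI7_6))
lemma pm_KI7_4_5 : va 4 * va 5 ∈ KI₇ := by
  have h : va 4 * va 5 = (1 : SegU45) * (va 0 * va 9) + (-1 : SegU45) * (va 0 * va 6) := by linear_combination (-1 : SegU45) * rel0203 + (1 : SegU45) * rel0302 + (1 : SegU45) * rel1202 + (-1 : SegU45) * rel1301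
  rw [h]
  exact (add_mem (Ideal.mul_mem_left _ _ (Ideal.mul_mem_left _ _ gmem_KI7_9)) (Ideal.mul_mem_left _ _ (Ideal.mul_mem_left _ _ gmem_KI7_6)))
lemma pm_KI7_5_5 : va 5 * va 5 ∈ KI₇ := by
  have h : va 5 * va 5 = (-1 : SegU45) * (va 0 * va 10) + (1 : SegU45) * (va 1 * va 9) + (1 : SegU45) * (va 0 * va 7) + (-1 : SegU45) * (va 1 * va 6) := by linear_combination (-1 : SegU45) * rel0213 + (1 : SegU45) * rel0312 + (1 : SegU45) * rel1212 + (1 : SegU45) * rel2301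
  rw [h]
  exact (add_mem (add_mem (add_mem (Ideal.mul_mem_left _ _ (Ideal.mul_mem_left _ _ gmem_KI7_10)) (Ideal.mul_mem_left _ _ (Ideal.mul_mem_left _ _ gmem_KI7_9))) (Ideal.mul_mem_left _ _ (Ideal.mul_mem_left _ _ gmem_KI7_7))) (Ideal.mul_mem_left _ _ (Ideal.mul_mem_left _ _ gmem_KI7_6)))
lemma pm_KI13_0_4 : va 0 * va 4 ∈ KI₁₃ := by
  have h : va 0 * va 4 = (0 : SegU45) := by linear_combination (-1 : SegU45) * rel0201
  rw [h]
  exact (zero_mem _)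
lemma pm_KI13_1_4 : va 1 * va 4 ∈ KI₁₃ := by
  have h : va 1 * va 4 = (1 : SegU45) * (va 0 * va 5) := by linear_combination (-1 : SegU45) * rel1201
  rw [h]
  exact (Ideal.mul_mem_left _ _ (Ideal.mul_mem_left _ _ gmem_KI13_5))
lemma pm_KI13_2_4 : va 2 * va 4 ∈ KI₁₃ := by
  have h : va 2 * va 4 = (1 : SegU45) * (va 0 * va 6) := by linear_combination (-1 : SegU45) * rel1202
  rw [h]
  exact (Ideal.mul_mem_left _ _ (Ideal.mul_mem_left _ _ gmem_KI13_6))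
lemma pm_KI13_4_4 : va 4 * va 4 ∈ KI₁₃ := by
  have h : va 4 * va 4 = (-1 : SegU45) * (va 0 * va 5) := by linear_combination (-1 : SegU45) * rel0202 + (1 : SegU45) * rel1201
  rw [h]
  exact (Ideal.mul_mem_left _ _ (Ideal.mul_mem_left _ _ gmem_KI13_5))

/-! ### The evaluation at the origin and the maximal ideal -/

lemma hC0_00 : (constantCoeff : MvPolynomial (Fin 12) ℚ →+* ℚ) (segMat45 0 0) = 0 := by
  rw [segE00]; simp
lemma hC0_01 : (constantCoeff : MvPolynomial (Fin 12) ℚ →+* ℚ) (segMat45 0 1) = 0 := by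
  rw [segE01]; simp
lemma hC0_02 : (constantCoeff : MvPolynomial (Fin 12) ℚ →+* ℚ) (segMat45 0 2) = 0 := by
  rw [segE02]; simp
lemma hC0_03 : (constantCoeff : MvPolynomial (Fin 12) ℚ →+* ℚ) (segMat45 0 3) = 0 := by
  rw [segE03]; simp
lemma hC0_04 : (constantCoeff : MvPolynomial (Fin 12) ℚ →+* ℚ) (segMat45 0 4) = 0 := by
  rw [segE04]; simp
lemma hC0_10 : (constantCoeff : MvPolynomial (Fin 12) ℚ →+* ℚ) (segMat45 1 0) = 0 := by
  rw [segE10]; simp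
lemma hC0_11 : (constantCoeff : MvPolynomial (Fin 12) ℚ →+* ℚ) (segMat45 1 1) = 0 := by
  rw [segE11]; simp
lemma hC0_12 : (constantCoeff : MvPolynomial (Fin 12) ℚ →+* ℚ) (segMat45 1 2) = 0 := by
  rw [segE12]; simp
lemma hC0_13 : (constantCoeff : MvPolynomial (Fin 12) ℚ →+* ℚ) (segMat45 1 3) = 0 := by
  rw [segE13]; simp
lemma hC0_14 : (constantCoeff : MvPolynomial (Fin 12) ℚ →+* ℚ) (segMat45 1 4) = 0 := by
  rw [segE14]; simp
lemma hC0_20 : (constantCoeff : MvPolynomial (Fin 12) ℚ →+* ℚ) (segMat45 2 0) = 0 := by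
  rw [segE20]; simp
lemma hC0_21 : (constantCoeff : MvPolynomial (Fin 12) ℚ →+* ℚ) (segMat45 2 1) = 0 := by
  rw [segE21]; simp
lemma hC0_22 : (constantCoeff : MvPolynomial (Fin 12) ℚ →+* ℚ) (segMat45 2 2) = 0 := by
  rw [segE22]; simp
lemma hC0_23 : (constantCoeff : MvPolynomial (Fin 12) ℚ →+* ℚ) (segMat45 2 3) = 0 := by
  rw [segE23]; simp
lemma hC0_24 : (constantCoeff : MvPolynomial (Fin 12) ℚ →+* ℚ) (segMat45 2 4) = 0 := by
  rw [segE24]; simp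
lemma hC0_30 : (constantCoeff : MvPolynomial (Fin 12) ℚ →+* ℚ) (segMat45 3 0) = 0 := by
  rw [segE30]; simp
lemma hC0_31 : (constantCoeff : MvPolynomial (Fin 12) ℚ →+* ℚ) (segMat45 3 1) = 0 := by
  rw [segE31]; simp
lemma hC0_32 : (constantCoeff : MvPolynomial (Fin 12) ℚ →+* ℚ) (segMat45 3 2) = 0 := by
  rw [segE32]; simp
lemma hC0_33 : (constantCoeff : MvPolynomial (Fin 12) ℚ →+* ℚ) (segMat45 3 3) = 0 := by
  rw [segE33]; simp
lemma hC0_34 : (constantCoeff : MvPolynomial (Fin 12) ℚ →+* ℚ) (segMat45 3 4) = 0 := by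
  rw [segE34]; simp
lemma hC0 : ∀ (i : Fin 4) (j : Fin 5),
    (constantCoeff : MvPolynomial (Fin 12) ℚ →+* ℚ) (segMat45 i j) = 0 := by
  intro i j
  fin_cases i <;> fin_cases j <;>
    first | exact hC0_00 | exact hC0_01 | exact hC0_02 | exact hC0_03 | exact hC0_04 | exact hC0_10 | exact hC0_11 | exact hC0_12 | exact hC0_13 | exact hC0_14 | exact hC0_20 | exact hC0_21 | exact hC0_22 | exact hC0_23 | exact hC0_24 | exact hC0_30 | exact hC0_31 | exact hC0_32 | exact hC0_33 | exact hC0_34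

lemma seg_le_ker0 :
    segIdeal45 ≤ RingHom.ker (constantCoeff : MvPolynomial (Fin 12) ℚ →+* ℚ) := by
  rw [segIdeal45, Ideal.span_le]
  rintro p ⟨i, i', j, j', -, -, rfl⟩
  simp [RingHom.mem_ker, map_sub, map_mul, hC0]

def Φ0 : SegU45 →+* ℚ :=
  Ideal.Quotient.lift segIdeal45 constantCoeff (fun _ ha => seg_le_ker0 ha)

lemma Φ0_mk (p : MvPolynomial (Fin 12) ℚ) :
    Φ0 (Ideal.Quotient.mk segIdeal45 p) = constantCoeff p := by
  exact Ideal.Quotient.lift_mk _ _ _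

lemma va_mem_Km (k : Fin 12) : va k ∈ Km := Ideal.subset_span ⟨k, rfl⟩

lemma Km_le_ker : Km ≤ RingHom.ker Φ0 := by
  show Ideal.span (Set.range va) ≤ _
  rw [Ideal.span_le]
  rintro x ⟨k, rfl⟩
  simp [RingHom.mem_ker, va, Φ0_mk]

lemma mk_sub_const_mem (p : MvPolynomial (Fin 12) ℚ) :
    Ideal.Quotient.mk segIdeal45 p
      - Ideal.Quotient.mk segIdeal45 (C (constantCoeff p)) ∈ Km := by
  induction p using MvPolynomial.induction_on with
  | C a => simp
  | add p q hp hq =>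
      have : Ideal.Quotient.mk segIdeal45 (p + q)
          - Ideal.Quotient.mk segIdeal45 (C (constantCoeff (p + q)))
          = (Ideal.Quotient.mk segIdeal45 p
              - Ideal.Quotient.mk segIdeal45 (C (constantCoeff p)))
            + (Ideal.Quotient.mk segIdeal45 q
              - Ideal.Quotient.mk segIdeal45 (C (constantCoeff q))) := by
        simp only [map_add]
        ring
      rw [this]
      exact add_mem hp hq
  | mul_X p i _ =>
      have : Ideal.Quotient.mk segIdeal45 (p * X i)
          - Ideal.Quotient.mk segIdeal45 (C (constantCoeff (p * X i)))
          = Ideal.Quotient.mk segIdeal45 p * va i := by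
        simp [va, map_mul]
      rw [this]
      exact Ideal.mul_mem_left _ _ (va_mem_Km i)

lemma Km_eq_ker : Km = RingHom.ker Φ0 := by
  refine le_antisymm Km_le_ker ?_
  intro x hx
  obtain ⟨p, rfl⟩ := Ideal.Quotient.mk_surjective x
  rw [RingHom.mem_ker, Φ0_mk] at hx
  have h := mk_sub_const_mem p
  rw [hx] at h
  simpa using h

lemma Φ0_surj : Function.Surjective Φ0 := fun q =>
  ⟨Ideal.Quotient.mk segIdeal45 (C q), by simp [Φ0_mk]⟩

lemma Km_max : Km.IsMaximal := by
  rw [Km_eq_ker]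
  exact RingHom.ker_isMaximal_of_surjective Φ0 Φ0_surj

/-! ### colon helpers -/

lemma span_le_colon {I : Ideal SegU45} {T S : Set SegU45}
    (h : ∀ t ∈ T, ∀ s ∈ S, t * s ∈ I) :
    Ideal.span T ≤ Submodule.colon I (Ideal.span S) := by
  rw [Ideal.span_le]
  intro t ht
  rw [SetLike.mem_coe, Submodule.mem_colon]
  intro p hp
  induction hp using Submodule.span_induction with
  | mem x hx => rw [smul_eq_mul]; exact h t ht x hx
  | zero => rw [smul_zero]; exact I.zero_mem
  | add x y _ _ hx hy => rw [smul_add]; exact I.add_mem hx hy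
  | smul r x _ hx =>
      rw [smul_comm]
      exact Submodule.smul_mem I r hx

lemma colon_ne_top {I J : Ideal SegU45} {j : SegU45} (hj : j ∈ J) (hnot : j ∉ I) :
    Submodule.colon I J ≠ ⊤ := by
  intro h
  have h1 : (1 : SegU45) ∈ Submodule.colon I J := by rw [h]; trivial
  have h2 := Submodule.mem_colon.mp h1 j hj
  rw [smul_eq_mul, one_mul] at h2
  exact hnot h2

lemma colon_eq_Km {I J : Ideal SegU45} {j : SegU45} (hj : j ∈ J) (hnot : j ∉ I)
    (hle : Km ≤ Submodule.colon I J) : Submodule.colon I J = Km :=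
  (Km_max.eq_of_le (colon_ne_top hj hnot) hle).symm

lemma not_mem_of_ker {I : Ideal SegU45} (f : SegU45 →+* W6)
    (hker : I ≤ RingHom.ker f) {x : SegU45} (hx : f x ≠ 0) : x ∉ I :=
  fun h => hx (hker h)

lemma va_mem_KI11 (k : Fin 12) (hk : k ≠ 0) : va k ∈ KI₁₁ := by
  fin_cases k
  · exact absurd rfl hk
  all_goals exact Ideal.subset_span (by simp)

lemma Km_mul_va0 {r : SegU45} (hr : r ∈ Km) : r * va 0 ∈ KI₁₁ := by
  induction hr using Submodule.span_induction with
  | mem x hx =>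
      obtain ⟨k, rfl⟩ := hx
      by_cases hk : k = 0
      · subst hk; rw [va0sq]; exact zero_mem _
      · exact Ideal.mul_mem_right _ _ (va_mem_KI11 k hk)
  | zero => rw [zero_mul]; exact zero_mem _
  | add x y _ _ hx hy => rw [add_mul]; exact add_mem hx hy
  | smul s x _ hx => rw [smul_eq_mul, mul_assoc]; exact Ideal.mul_mem_left _ _ hx

lemma Km_le_sup : Km ≤ KI₁₁ ⊔ Ideal.span {va 0} := by
  show Ideal.span (Set.range va) ≤ _
  rw [Ideal.span_le]
  rintro x ⟨k, rfl⟩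
  by_cases hk : k = 0
  · subst hk
    exact SetLike.mem_coe.mpr (Submodule.mem_sup_right (Ideal.subset_span rfl))
  · exact SetLike.mem_coe.mpr (Submodule.mem_sup_left (va_mem_KI11 k hk))

open W6 in
lemma hcomp : aProj.comp ΦW = Φ0 := by
  apply Ideal.Quotient.ringHom_ext
  apply MvPolynomial.ringHom_ext
  · intro q
    simp [Φ0_mk, ΦW, Ideal.Quotient.lift_mk, ψW, aProj, toW]
  · intro k
    have h1 : (aProj.comp ΦW).comp (Ideal.Quotient.mk segIdeal45) (X k) = (ptW k).a := by
      simp [ΦW, Ideal.Quotient.lift_mk, ψW, aProj]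
    have h2 : (ptW k).a = 0 := by
      rw [ptW]
      split_ifs <;> simp [e0, e2, e4, es]
    simp only [RingHom.comp_apply] at h1 ⊢
    rw [h1, h2]
    simp [Φ0_mk]

open W6 in
lemma ΦW_va0 : ΦW (va 0) = e0 := by rw [ΦW_va, ptWv0]

open W6 in
lemma colon_eq_KI11 {I J : Ideal SegU45} (hle : KI₁₁ ≤ Submodule.colon I J)
    (hIk : I ≤ RingHom.ker ΦW) {j2 : SegU45} (hj2 : j2 ∈ J)
    (hj2e : ΦW j2 = e2 ∨ ΦW j2 = -e2) :
    Submodule.colon I J = KI₁₁ := by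
  refine le_antisymm ?_ hle
  intro x hx
  have hxj : ∀ y, y ∈ Submodule.colon I J → ΦW y * ΦW j2 = 0 := by
    intro y hy
    rw [← map_mul]
    have := Submodule.mem_colon.mp hy j2 hj2
    rw [smul_eq_mul] at this
    exact hIk this
  have hae2 : ∀ y, y ∈ Submodule.colon I J → ΦW y * e2 = 0 := by
    intro y hy
    rcases hj2e with h | h
    · have := hxj y hy; rwa [h] at this
    · have := hxj y hy; rw [h, mul_neg, neg_eq_zero] at this; exact this
  have hxa : (ΦW x).a = 0 := ann_e2 _ (hae2 x hx)
  have hxKm : x ∈ Km := by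
    rw [Km_eq_ker, RingHom.mem_ker]
    have h : Φ0 x = (ΦW x).a := by rw [← hcomp]; rfl
    rw [h, hxa]
  obtain ⟨y, hy, z, hz, rfl⟩ := Submodule.mem_sup.mp (Km_le_sup hxKm)
  obtain ⟨r, rfl⟩ := Ideal.mem_span_singleton'.mp hz
  by_cases hr : r ∈ Km
  · exact add_mem hy (Km_mul_va0 hr)
  · exfalso
    obtain ⟨u, i, hiKm, hui⟩ := Km_max.exists_inv hr
    have hva0 : va 0 ∈ Submodule.colon I J := by
      have hzc : r * va 0 ∈ Submodule.colon I J := by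
        have hrw : r * va 0 = (y + r * va 0) - y := by ring
        rw [hrw]
        exact sub_mem hx (hle hy)
      have hrw2 : va 0 = u * (r * va 0) + i * va 0 := by
        have h1 : (u * r + i) * va 0 = va 0 := by rw [hui, one_mul]
        calc va 0 = (u * r + i) * va 0 := h1.symm
        _ = u * (r * va 0) + i * va 0 := by ring
      rw [hrw2]
      exact add_mem (Ideal.mul_mem_left _ u hzc) (hle (Km_mul_va0 hiKm))
    have h0 := hxj (va 0) hva0
    rw [ΦW_va0] at h0
    rcases hj2e with h | h
    · rw [h] at h0; exact e0_mul_e2_ne h0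
    · rw [h, mul_neg, neg_eq_zero] at h0; exact e0_mul_e2_ne h0

open W6

lemma e0_ne : (e0 : W6) ≠ 0 := by
  intro h; have := congrArg W6.b0 h; norm_num [e0] at this
lemma e0e0_ne : (e0 + e0 : W6) ≠ 0 := by
  intro h; have := congrArg W6.b0 h; norm_num [e0] at this
lemma KI8_le_kerW : KI₈ ≤ RingHom.ker ΦW := by
  show Ideal.span {va 11, va 10, va 9, va 8, va 7, va 6, va 3, va 5 + va 2} ≤ _
  rw [Ideal.span_le]
  intro x hx
  simp only [Set.mem_insert_iff, Set.mem_singleton_iff] at hx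
  rcases hx with rfl|rfl|rfl|rfl|rfl|rfl|rfl|rfl <;>
    simp [RingHom.mem_ker, map_add, ΦW_va, ptWv0, ptWv1, ptWv2, ptWv3, ptWv4, ptWv5, ptWv6, ptWv7, ptWv8, ptWv9, ptWv10, ptWv11]
lemma KI7_le_kerW : KI₇ ≤ RingHom.ker ΦW := by
  show Ideal.span {va 11, va 10, va 9, va 8, va 7, va 6, va 3} ≤ _
  rw [Ideal.span_le]
  intro x hx
  simp only [Set.mem_insert_iff, Set.mem_singleton_iff] at hx
  rcases hx with rfl|rfl|rfl|rfl|rfl|rfl|rfl <;>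
    simp [RingHom.mem_ker, map_add, ΦW_va, ptWv0, ptWv1, ptWv2, ptWv3, ptWv4, ptWv5, ptWv6, ptWv7, ptWv8, ptWv9, ptWv10, ptWv11]
lemma KI9_le_kerA : KI₉ ≤ RingHom.ker ΦA := by
  show Ideal.span {va 11, va 10, va 9, va 8, va 7, va 6, va 5, va 3, va 2} ≤ _
  rw [Ideal.span_le]
  intro x hx
  simp only [Set.mem_insert_iff, Set.mem_singleton_iff] at hx
  rcases hx with rfl|rfl|rfl|rfl|rfl|rfl|rfl|rfl|rfl <;>
    simp [RingHom.mem_ker, map_add, ΦA_va, ptAv0, ptAv1, ptAv2, ptAv3, ptAv4, ptAv5, ptAv6, ptAv7, ptAv8, ptAv9, ptAv10, ptAv11]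
lemma KI13_le_kerA : KI₁₃ ≤ RingHom.ker ΦA := by
  show Ideal.span {va 11, va 10, va 9, va 8, va 7, va 6, va 5, va 3} ≤ _
  rw [Ideal.span_le]
  intro x hx
  simp only [Set.mem_insert_iff, Set.mem_singleton_iff] at hx
  rcases hx with rfl|rfl|rfl|rfl|rfl|rfl|rfl|rfl <;>
    simp [RingHom.mem_ker, map_add, ΦA_va, ptAv0, ptAv1, ptAv2, ptAv3, ptAv4, ptAv5, ptAv6, ptAv7, ptAv8, ptAv9, ptAv10, ptAv11]
lemma KI10_le_kerB : KI₁₀ ≤ RingHom.ker ΦB := by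
  show Ideal.span {va 11, va 10, va 9, va 8, va 7, va 6, va 5, va 4 + va 1, va 3, va 2} ≤ _
  rw [Ideal.span_le]
  intro x hx
  simp only [Set.mem_insert_iff, Set.mem_singleton_iff] at hx
  rcases hx with rfl|rfl|rfl|rfl|rfl|rfl|rfl|rfl|rfl|rfl <;>
    simp [RingHom.mem_ker, map_add, ΦB_va, ptBv0, ptBv1, ptBv2, ptBv3, ptBv4, ptBv5, ptBv6, ptBv7, ptBv8, ptBv9, ptBv10, ptBv11]
lemma KI11_le_kerD : KI₁₁ ≤ RingHom.ker ΦD := by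
  show Ideal.span {va 11, va 10, va 9, va 8, va 7, va 6, va 5, va 4, va 3, va 2, va 1} ≤ _
  rw [Ideal.span_le]
  intro x hx
  simp only [Set.mem_insert_iff, Set.mem_singleton_iff] at hx
  rcases hx with rfl|rfl|rfl|rfl|rfl|rfl|rfl|rfl|rfl|rfl|rfl <;>
    simp [RingHom.mem_ker, map_add, ΦD_va, ptDv0, ptDv1, ptDv2, ptDv3, ptDv4, ptDv5, ptDv6, ptDv7, ptDv8, ptDv9, ptDv10, ptDv11]

lemma hnot2 : va 4 + va 1 ∉ KI₉ :=
  not_mem_of_ker ΦA KI9_le_kerA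
    (by rw [map_add, ΦA_va, ΦA_va, ptAv4, ptAv1]; exact e0e0_ne)
lemma hnot3 : va 4 ∉ KI₁₀ :=
  not_mem_of_ker ΦB KI10_le_kerB (by rw [ΦB_va, ptBv4]; exact e0_ne)
lemma hnot4 : va 4 ∉ KI₉ :=
  not_mem_of_ker ΦA KI9_le_kerA (by rw [ΦA_va, ptAv4]; exact e0_ne)
lemma hnot6 : va 4 ∉ KI₁₃ :=
  not_mem_of_ker ΦA KI13_le_kerA (by rw [ΦA_va, ptAv4]; exact e0_ne)
lemma hnot7 : va 0 ∉ KI₁₁ :=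
  not_mem_of_ker ΦD KI11_le_kerD (by rw [ΦD_va, ptDv0]; exact e0_ne)

lemma va00_mem : va 0 * va 0 ∈ KI₁₁ := by rw [va0sq]; exact zero_mem _
lemma hle1 : KI₁₁ ≤ Submodule.colon KI₈ KI₉ := by
  show Ideal.span {va 11, va 10, va 9, va 8, va 7, va 6, va 5, va 4, va 3, va 2, va 1} ≤ Submodule.colon KI₈ (Ideal.span {va 11, va 10, va 9, va 8, va 7, va 6, va 5, va 3, va 2})
  apply span_le_colon
  intro t ht s hs
  simp only [Set.mem_insert_iff, Set.mem_singleton_iff] at ht hs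
  rcases ht with rfl|rfl|rfl|rfl|rfl|rfl|rfl|rfl|rfl|rfl|rfl <;> rcases hs with rfl|rfl|rfl|rfl|rfl|rfl|rfl|rfl|rfl <;>
    first
      | exact Ideal.mul_mem_left _ _ gmem_KI8_11
      | exact Ideal.mul_mem_left _ _ gmem_KI8_10
      | exact Ideal.mul_mem_left _ _ gmem_KI8_9
      | exact Ideal.mul_mem_left _ _ gmem_KI8_8
      | exact Ideal.mul_mem_left _ _ gmem_KI8_7
      | exact Ideal.mul_mem_left _ _ gmem_KI8_6
      | exact Ideal.mul_mem_left _ _ gmem_KI8_3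
      | exact Ideal.mul_mem_right _ _ gmem_KI8_11
      | exact Ideal.mul_mem_right _ _ gmem_KI8_10
      | exact Ideal.mul_mem_right _ _ gmem_KI8_9
      | exact Ideal.mul_mem_right _ _ gmem_KI8_8
      | exact Ideal.mul_mem_right _ _ gmem_KI8_7
      | exact Ideal.mul_mem_right _ _ gmem_KI8_6
      | exact Ideal.mul_mem_right _ _ gmem_KI8_3
      | exact pm_KI8_1_2
      | exact pm_KI8_1_5
      | exact pm_KI8_2_2
      | exact pm_KI8_2_5
      | exact pm_KI8_4_2
      | exact pm_KI8_4_5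
      | exact pm_KI8_5_2
      | exact pm_KI8_5_5
lemma hle5 : KI₁₁ ≤ Submodule.colon KI₇ KI₁₃ := by
  show Ideal.span {va 11, va 10, va 9, va 8, va 7, va 6, va 5, va 4, va 3, va 2, va 1} ≤ Submodule.colon KI₇ (Ideal.span {va 11, va 10, va 9, va 8, va 7, va 6, va 5, va 3})
  apply span_le_colon
  intro t ht s hs
  simp only [Set.mem_insert_iff, Set.mem_singleton_iff] at ht hs
  rcases ht with rfl|rfl|rfl|rfl|rfl|rfl|rfl|rfl|rfl|rfl|rfl <;> rcases hs with rfl|rfl|rfl|rfl|rfl|rfl|rfl|rfl <;>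
    first
      | exact Ideal.mul_mem_left _ _ gmem_KI7_11
      | exact Ideal.mul_mem_left _ _ gmem_KI7_10
      | exact Ideal.mul_mem_left _ _ gmem_KI7_9
      | exact Ideal.mul_mem_left _ _ gmem_KI7_8
      | exact Ideal.mul_mem_left _ _ gmem_KI7_7
      | exact Ideal.mul_mem_left _ _ gmem_KI7_6
      | exact Ideal.mul_mem_left _ _ gmem_KI7_3
      | exact Ideal.mul_mem_right _ _ gmem_KI7_11
      | exact Ideal.mul_mem_right _ _ gmem_KI7_10
      | exact Ideal.mul_mem_right _ _ gmem_KI7_9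
      | exact Ideal.mul_mem_right _ _ gmem_KI7_8
      | exact Ideal.mul_mem_right _ _ gmem_KI7_7
      | exact Ideal.mul_mem_right _ _ gmem_KI7_6
      | exact Ideal.mul_mem_right _ _ gmem_KI7_3
      | exact pm_KI7_1_5
      | exact pm_KI7_2_5
      | exact pm_KI7_4_5
      | exact pm_KI7_5_5
lemma hle2 : Km ≤ Submodule.colon KI₉ KI₁₀ := by
  show Ideal.span (Set.range va) ≤ Submodule.colon KI₉ (Ideal.span {va 11, va 10, va 9, va 8, va 7, va 6, va 5, va 4 + va 1, va 3, va 2})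
  apply span_le_colon
  rintro t ⟨k, rfl⟩ s hs
  simp only [Set.mem_insert_iff, Set.mem_singleton_iff] at hs
  fin_cases k <;> rcases hs with rfl|rfl|rfl|rfl|rfl|rfl|rfl|rfl|rfl|rfl <;>
    first
      | exact Ideal.mul_mem_left _ _ gmem_KI9_11
      | exact Ideal.mul_mem_left _ _ gmem_KI9_10
      | exact Ideal.mul_mem_left _ _ gmem_KI9_9
      | exact Ideal.mul_mem_left _ _ gmem_KI9_8
      | exact Ideal.mul_mem_left _ _ gmem_KI9_7
      | exact Ideal.mul_mem_left _ _ gmem_KI9_6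
      | exact Ideal.mul_mem_left _ _ gmem_KI9_5
      | exact Ideal.mul_mem_left _ _ gmem_KI9_3
      | exact Ideal.mul_mem_left _ _ gmem_KI9_2
      | exact Ideal.mul_mem_right _ _ gmem_KI9_11
      | exact Ideal.mul_mem_right _ _ gmem_KI9_10
      | exact Ideal.mul_mem_right _ _ gmem_KI9_9
      | exact Ideal.mul_mem_right _ _ gmem_KI9_8
      | exact Ideal.mul_mem_right _ _ gmem_KI9_7
      | exact Ideal.mul_mem_right _ _ gmem_KI9_6
      | exact Ideal.mul_mem_right _ _ gmem_KI9_5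
      | exact Ideal.mul_mem_right _ _ gmem_KI9_3
      | exact Ideal.mul_mem_right _ _ gmem_KI9_2
      | exact pm_KI9_0_1
      | exact pm_KI9_0_4
      | exact pm_KI9_1_1
      | exact pm_KI9_1_4
      | exact pm_KI9_4_1
      | exact pm_KI9_4_4
      | (rw [mul_add]; exact add_mem pm_KI9_0_4 pm_KI9_0_1)
      | (rw [mul_add]; exact add_mem pm_KI9_1_4 pm_KI9_1_1)
      | (rw [mul_add]; exact add_mem pm_KI9_4_4 pm_KI9_4_1)
lemma hle3 : Km ≤ Submodule.colon KI₁₀ KI₁₁ := by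
  show Ideal.span (Set.range va) ≤ Submodule.colon KI₁₀ (Ideal.span {va 11, va 10, va 9, va 8, va 7, va 6, va 5, va 4, va 3, va 2, va 1})
  apply span_le_colon
  rintro t ⟨k, rfl⟩ s hs
  simp only [Set.mem_insert_iff, Set.mem_singleton_iff] at hs
  fin_cases k <;> rcases hs with rfl|rfl|rfl|rfl|rfl|rfl|rfl|rfl|rfl|rfl|rfl <;>
    first
      | exact Ideal.mul_mem_left _ _ gmem_KI10_11
      | exact Ideal.mul_mem_left _ _ gmem_KI10_10
      | exact Ideal.mul_mem_left _ _ gmem_KI10_9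
      | exact Ideal.mul_mem_left _ _ gmem_KI10_8
      | exact Ideal.mul_mem_left _ _ gmem_KI10_7
      | exact Ideal.mul_mem_left _ _ gmem_KI10_6
      | exact Ideal.mul_mem_left _ _ gmem_KI10_5
      | exact Ideal.mul_mem_left _ _ gmem_KI10_3
      | exact Ideal.mul_mem_left _ _ gmem_KI10_2
      | exact Ideal.mul_mem_right _ _ gmem_KI10_11
      | exact Ideal.mul_mem_right _ _ gmem_KI10_10
      | exact Ideal.mul_mem_right _ _ gmem_KI10_9
      | exact Ideal.mul_mem_right _ _ gmem_KI10_8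
      | exact Ideal.mul_mem_right _ _ gmem_KI10_7
      | exact Ideal.mul_mem_right _ _ gmem_KI10_6
      | exact Ideal.mul_mem_right _ _ gmem_KI10_5
      | exact Ideal.mul_mem_right _ _ gmem_KI10_3
      | exact Ideal.mul_mem_right _ _ gmem_KI10_2
      | exact pm_KI10_0_1
      | exact pm_KI10_0_4
      | exact pm_KI10_1_1
      | exact pm_KI10_1_4
      | exact pm_KI10_4_1
      | exact pm_KI10_4_4
lemma hle4 : Km ≤ Submodule.colon KI₉ KI₁₂ := by
  show Ideal.span (Set.range va) ≤ Submodule.colon KI₉ (Ideal.span {va 11, va 10, va 9, va 8, va 7, va 6, va 5, va 4, va 3, va 2})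
  apply span_le_colon
  rintro t ⟨k, rfl⟩ s hs
  simp only [Set.mem_insert_iff, Set.mem_singleton_iff] at hs
  fin_cases k <;> rcases hs with rfl|rfl|rfl|rfl|rfl|rfl|rfl|rfl|rfl|rfl <;>
    first
      | exact Ideal.mul_mem_left _ _ gmem_KI9_11
      | exact Ideal.mul_mem_left _ _ gmem_KI9_10
      | exact Ideal.mul_mem_left _ _ gmem_KI9_9
      | exact Ideal.mul_mem_left _ _ gmem_KI9_8
      | exact Ideal.mul_mem_left _ _ gmem_KI9_7
      | exact Ideal.mul_mem_left _ _ gmem_KI9_6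
      | exact Ideal.mul_mem_left _ _ gmem_KI9_5
      | exact Ideal.mul_mem_left _ _ gmem_KI9_3
      | exact Ideal.mul_mem_left _ _ gmem_KI9_2
      | exact Ideal.mul_mem_right _ _ gmem_KI9_11
      | exact Ideal.mul_mem_right _ _ gmem_KI9_10
      | exact Ideal.mul_mem_right _ _ gmem_KI9_9
      | exact Ideal.mul_mem_right _ _ gmem_KI9_8
      | exact Ideal.mul_mem_right _ _ gmem_KI9_7
      | exact Ideal.mul_mem_right _ _ gmem_KI9_6
      | exact Ideal.mul_mem_right _ _ gmem_KI9_5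
      | exact Ideal.mul_mem_right _ _ gmem_KI9_3
      | exact Ideal.mul_mem_right _ _ gmem_KI9_2
      | exact pm_KI9_0_1
      | exact pm_KI9_0_4
      | exact pm_KI9_1_1
      | exact pm_KI9_1_4
      | exact pm_KI9_4_1
      | exact pm_KI9_4_4
lemma hle6 : Km ≤ Submodule.colon KI₁₃ KI₁₄ := by
  show Ideal.span (Set.range va) ≤ Submodule.colon KI₁₃ (Ideal.span {va 11, va 10, va 9, va 8, va 7, va 6, va 5, va 4, va 3})
  apply span_le_colon
  rintro t ⟨k, rfl⟩ s hs
  simp only [Set.mem_insert_iff, Set.mem_singleton_iff] at hs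
  fin_cases k <;> rcases hs with rfl|rfl|rfl|rfl|rfl|rfl|rfl|rfl|rfl <;>
    first
      | exact Ideal.mul_mem_left _ _ gmem_KI13_11
      | exact Ideal.mul_mem_left _ _ gmem_KI13_10
      | exact Ideal.mul_mem_left _ _ gmem_KI13_9
      | exact Ideal.mul_mem_left _ _ gmem_KI13_8
      | exact Ideal.mul_mem_left _ _ gmem_KI13_7
      | exact Ideal.mul_mem_left _ _ gmem_KI13_6
      | exact Ideal.mul_mem_left _ _ gmem_KI13_5
      | exact Ideal.mul_mem_left _ _ gmem_KI13_3
      | exact Ideal.mul_mem_right _ _ gmem_KI13_11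
      | exact Ideal.mul_mem_right _ _ gmem_KI13_10
      | exact Ideal.mul_mem_right _ _ gmem_KI13_9
      | exact Ideal.mul_mem_right _ _ gmem_KI13_8
      | exact Ideal.mul_mem_right _ _ gmem_KI13_7
      | exact Ideal.mul_mem_right _ _ gmem_KI13_6
      | exact Ideal.mul_mem_right _ _ gmem_KI13_5
      | exact Ideal.mul_mem_right _ _ gmem_KI13_3
      | exact pm_KI13_0_4
      | exact pm_KI13_1_4
      | exact pm_KI13_2_4
      | exact pm_KI13_4_4
lemma hle7 : Km ≤ Submodule.colon KI₁₁ Km := by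
  show Ideal.span (Set.range va) ≤ Submodule.colon KI₁₁ (Ideal.span (Set.range va))
  apply span_le_colon
  rintro t ⟨k, rfl⟩ s ⟨k', rfl⟩
  fin_cases k <;> fin_cases k' <;>
    first
      | exact Ideal.mul_mem_left _ _ gmem_KI11_11
      | exact Ideal.mul_mem_left _ _ gmem_KI11_10
      | exact Ideal.mul_mem_left _ _ gmem_KI11_9
      | exact Ideal.mul_mem_left _ _ gmem_KI11_8
      | exact Ideal.mul_mem_left _ _ gmem_KI11_7
      | exact Ideal.mul_mem_left _ _ gmem_KI11_6
      | exact Ideal.mul_mem_left _ _ gmem_KI11_5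
      | exact Ideal.mul_mem_left _ _ gmem_KI11_4
      | exact Ideal.mul_mem_left _ _ gmem_KI11_3
      | exact Ideal.mul_mem_left _ _ gmem_KI11_2
      | exact Ideal.mul_mem_left _ _ gmem_KI11_1
      | exact Ideal.mul_mem_right _ _ gmem_KI11_11
      | exact Ideal.mul_mem_right _ _ gmem_KI11_10
      | exact Ideal.mul_mem_right _ _ gmem_KI11_9
      | exact Ideal.mul_mem_right _ _ gmem_KI11_8
      | exact Ideal.mul_mem_right _ _ gmem_KI11_7
      | exact Ideal.mul_mem_right _ _ gmem_KI11_6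
      | exact Ideal.mul_mem_right _ _ gmem_KI11_5
      | exact Ideal.mul_mem_right _ _ gmem_KI11_4
      | exact Ideal.mul_mem_right _ _ gmem_KI11_3
      | exact Ideal.mul_mem_right _ _ gmem_KI11_2
      | exact Ideal.mul_mem_right _ _ gmem_KI11_1
      | exact va00_mem

lemma claim1 : Submodule.colon KI₈ KI₉ = KI₁₁ :=
  colon_eq_KI11 hle1 KI8_le_kerW gmem_KI9_2 (Or.inl (by rw [ΦW_va, ptWv2]))
lemma claim5 : Submodule.colon KI₇ KI₁₃ = KI₁₁ :=
  colon_eq_KI11 hle5 KI7_le_kerW gmem_KI13_5 (Or.inr (by rw [ΦW_va, ptWv5]))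
lemma claim2 : Submodule.colon KI₉ KI₁₀ = Km := colon_eq_Km gmemS_KI10 hnot2 hle2
lemma claim3 : Submodule.colon KI₁₀ KI₁₁ = Km := colon_eq_Km gmem_KI11_4 hnot3 hle3
lemma claim4 : Submodule.colon KI₉ KI₁₂ = Km := colon_eq_Km gmem_KI12_4 hnot4 hle4
lemma claim6 : Submodule.colon KI₁₃ KI₁₄ = Km := colon_eq_Km gmem_KI14_4 hnot6 hle6
lemma claim7 : Submodule.colon KI₁₁ Km = Km := colon_eq_Km (va_mem_Km 0) hnot7 hle7

theorem stmt_14 :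
    Submodule.colon KI₈ KI₉ = KI₁₁ ∧
    Submodule.colon KI₉ KI₁₀ = Km ∧
    Submodule.colon KI₁₀ KI₁₁ = Km ∧
    Submodule.colon KI₉ KI₁₂ = Km ∧
    Submodule.colon KI₇ KI₁₃ = KI₁₁ ∧
    Submodule.colon KI₁₃ KI₁₄ = Km ∧
    Submodule.colon KI₁₁ Km = Km :=
  ⟨claim1, claim2, claim3, claim4, claim5, claim6, claim7⟩
end
end
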